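/- arXiv:math/0603513 — 8 statements merged into one kernel-verified Lean document; each statement's English description precedes it below -/
import Mathlib

section
/- Let G be a hereditarily non-topologizable group and let H be a subgroup of G. Then H has a smallest subgroup N of finite index, i.e. N has finite index in H and N is contained in every finite-index subgroup of H; moreover N is perfect, i.e. N = [N, N]. -/
def NonTopologizable (G : Type*) [Group G] : Prop :=
  ∀ t : TopologicalSpace G, @IsTopologicalGroup G t _ → @T2Space G t → t = ⊥

def HereditarilyNonTopologizable (G : Type*) [Group G] : Prop :=
  ∀ (H : Subgroup G) (N : Subgroup ↥H) [N.Normal], NonTopologizable (↥H ⧸ N)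

open Topology Filter

lemma key {G : Type*} [Group G] (hNT : NonTopologizable G) {ι : Type*} {H : ι → Type*}
    [∀ i, Group (H i)] [∀ i, TopologicalSpace (H i)] [∀ i, IsTopologicalGroup (H i)]
    [∀ i, T2Space (H i)] (f : ∀ i, G →* H i)
    (hsep : ∀ g : G, (∀ i, f i g = 1) → g = 1) :
    ∃ s : Finset ι, ∃ V : ∀ i, Set (H i), (∀ i ∈ s, V i ∈ 𝓝 (1 : H i)) ∧
      ∀ g : G, (∀ i ∈ s, f i g ∈ V i) → g = 1 := by
  classical
  let φ : G →* (∀ i, H i) := Pi.monoidHom f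
  have hinj : Function.Injective φ := by
    intro a b hab
    have h1 : a * b⁻¹ = 1 := hsep _ (fun i => by
      have : f i a = f i b := congrFun hab i
      simp [φ, Pi.monoidHom, this])
    exact mul_inv_eq_one.mp h1
  letI t : TopologicalSpace G := TopologicalSpace.induced φ inferInstance
  haveI htg : @IsTopologicalGroup G t _ := topologicalGroup_induced φ
  haveI ht2 : @T2Space G t := @T2Space.of_injective_continuous G _ t _ _ _ hinj continuous_induced_dom
  have hbot : t = ⊥ := hNT t htg ht2
  have h1 : {(1 : G)} ∈ @nhds G t 1 := by
    rw [hbot]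
    letI : TopologicalSpace G := ⊥
    haveI : DiscreteTopology G := ⟨rfl⟩
    exact mem_nhds_discrete.mpr rfl
  rw [nhds_induced] at h1
  obtain ⟨U, hU, hUsub⟩ := h1
  rw [map_one, nhds_pi, Filter.mem_pi] at hU
  obtain ⟨I, hIfin, V, hV, hVsub⟩ := hU
  refine ⟨hIfin.toFinset, V, fun i hi => hV i, fun g hg => ?_⟩
  have : φ g ∈ Set.pi I V := fun i hi => hg i (hIfin.mem_toFinset.mpr hi)
  have := hUsub (hVsub this)
  simpa using this

lemma fin_of_profinite {Q : Type*} [Group Q] (hNT : NonTopologizable Q)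
    (hsep : ∀ q : Q, (∀ N : Subgroup Q, N.Normal → N.FiniteIndex → q ∈ N) → q = 1) :
    Finite Q := by
  classical
  let ι := {N : Subgroup Q // N.Normal ∧ N.FiniteIndex}
  let Hf : ι → Type _ := fun i => haveI := i.2.1; Q ⧸ i.1
  letI instG : ∀ i : ι, Group (Hf i) := fun i => haveI := i.2.1; inferInstanceAs (Group (Q ⧸ i.1))
  letI instT : ∀ i : ι, TopologicalSpace (Hf i) := fun i => ⊥
  haveI instD : ∀ i : ι, DiscreteTopology (Hf i) := fun i => ⟨rfl⟩
  haveI instTG : ∀ i : ι, IsTopologicalGroup (Hf i) := fun i =>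
    { continuous_mul := continuous_of_discreteTopology
      continuous_inv := continuous_of_discreteTopology }
  haveI instT2 : ∀ i : ι, T2Space (Hf i) := fun i => DiscreteTopology.toT2Space
  let f : ∀ i : ι, Q →* Hf i := fun i => haveI := i.2.1; QuotientGroup.mk' i.1
  have hsep' : ∀ g : Q, (∀ i, f i g = 1) → g = 1 := by
    intro g hg
    refine hsep g fun N hN hFI => ?_
    haveI := hN
    have := hg ⟨N, hN, hFI⟩
    exact (QuotientGroup.eq_one_iff g).mp this
  obtain ⟨s, V, hV, hVsep⟩ := key hNT f hsep'
  have hfin : (⨅ i ∈ s, (i : ι).1).FiniteIndex := by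
    haveI : ∀ i : {x : ι // x ∈ s}, (i.1.1).FiniteIndex := fun i => i.1.2.2
    exact Subgroup.finiteIndex_iInf' _ (fun i hi => i.2.2)
  have hbot : (⨅ i ∈ s, (i : ι).1) = ⊥ := by
    refine (Subgroup.eq_bot_iff_forall _).mpr fun g hg => ?_
    refine hVsep g fun i hi => ?_
    have hgi : g ∈ i.1 := by
      have := Subgroup.mem_iInf.mp hg i
      exact (Subgroup.mem_iInf.mp this) hi
    have : f i g = 1 := by
      haveI := i.2.1
      exact (QuotientGroup.eq_one_iff g).mpr hgi
    rw [this]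
    exact mem_of_mem_nhds (hV i hi)
  rw [hbot] at hfin
  have hne := hfin.index_ne_zero
  rw [Subgroup.index_bot] at hne
  exact Nat.finite_of_card_ne_zero hne

noncomputable abbrev RCirc : Type := AddCircle (1 : ℝ)

lemma ratCircle_embeds : ∃ ι : AddCircle (1 : ℚ) →+ RCirc, Function.Injective ι := by
  have hle : AddSubgroup.zmultiples (1 : ℚ) ≤
      (AddSubgroup.zmultiples (1 : ℝ)).comap (Rat.castHom ℝ).toAddMonoidHom := by
    intro x hx
    obtain ⟨n, hn⟩ := AddSubgroup.mem_zmultiples_iff.mp hx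
    refine AddSubgroup.mem_comap.mpr (AddSubgroup.mem_zmultiples_iff.mpr ⟨n, ?_⟩)
    have h1 : x = (n : ℚ) := by rw [← hn, zsmul_eq_mul, mul_one]
    show n • (1:ℝ) = ((x : ℚ) : ℝ)
    rw [zsmul_eq_mul, mul_one, h1]; push_cast; ring
  refine ⟨QuotientAddGroup.map _ _ (Rat.castHom ℝ).toAddMonoidHom hle, ?_⟩
  intro x y hxy
  induction x using QuotientAddGroup.induction_on with | H x =>
  induction y using QuotientAddGroup.induction_on with | H y =>
  rw [QuotientAddGroup.map_mk, QuotientAddGroup.map_mk] at hxy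
  have h2 := QuotientAddGroup.eq_iff_sub_mem.mp hxy
  obtain ⟨n, hn⟩ := AddSubgroup.mem_zmultiples_iff.mp h2
  rw [zsmul_eq_mul, mul_one] at hn
  have h4 : x - y = (n : ℚ) := by
    have hc : ((x - y : ℚ) : ℝ) = ((n : ℚ) : ℝ) := by
      simp only [RingHom.toAddMonoidHom_eq_coe, AddMonoidHom.coe_coe, Rat.coe_castHom] at hn
      push_cast
      linarith
    exact_mod_cast hc
  refine QuotientAddGroup.eq_iff_sub_mem.mpr ?_
  exact AddSubgroup.mem_zmultiples_iff.mpr ⟨n, by rw [zsmul_eq_mul, mul_one, h4]⟩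

lemma exists_char {A : Type*} [CommGroup A] {a : A} (ha : a ≠ 1) :
    ∃ χ : A →* Multiplicative RCirc, χ a ≠ 1 := by
  obtain ⟨ι, hι⟩ := ratCircle_embeds
  obtain ⟨c, hc⟩ := CharacterModule.exists_character_apply_ne_zero_of_ne_zero
      (A := Additive A) (a := Additive.ofMul a) (by simpa using ha)
  let ψ : Additive A →+ RCirc := ι.comp (show Additive A →+ AddCircle (1:ℚ) from c)
  refine ⟨MonoidHom.mk' (fun x => Multiplicative.ofAdd (ψ (Additive.ofMul x))) ?_, ?_⟩
  · intro x y
    show Multiplicative.ofAdd (ψ (Additive.ofMul x + Additive.ofMul y)) = _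
    rw [map_add]
    rfl
  · show Multiplicative.ofAdd (ψ (Additive.ofMul a)) ≠ 1
    intro h
    apply hc
    have h0 : ψ (Additive.ofMul a) = 0 := by
      simpa using h
    have : ι (c (Additive.ofMul a)) = ι 0 := by rw [map_zero]; exact h0
    exact hι this

lemma comm_nontop_trivial {A : Type*} [CommGroup A] (hNT : NonTopologizable A)
    (hfi : ∀ K : Subgroup A, K.FiniteIndex → K = ⊤) (a : A) : a = 1 := by
  classical
  haveI : Fact ((0:ℝ) < 1) := ⟨zero_lt_one⟩
  have hsep : ∀ g : A, (∀ χ : A →* Multiplicative RCirc, χ g = 1) → g = 1 := by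
    intro g hg
    by_contra hne
    obtain ⟨χ, hχ⟩ := exists_char hne
    exact hχ (hg χ)
  obtain ⟨s, V, hV, hVsep⟩ := key hNT (fun χ : A →* Multiplicative RCirc => χ) hsep
  haveI : CompactSpace (Multiplicative RCirc) := inferInstanceAs (CompactSpace RCirc)
  let X := (i : {x // x ∈ s}) → Multiplicative RCirc
  let φ : A →* X := Pi.monoidHom (fun i => (i.1 : A →* Multiplicative RCirc))
  have hO : ∀ i : {x // x ∈ s}, ∃ O : Set (Multiplicative RCirc),
      O ⊆ V i.1 ∧ IsOpen O ∧ (1 : Multiplicative RCirc) ∈ O := by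
    intro i
    exact mem_nhds_iff.mp (hV i.1 i.2)
  choose O hOsub hOopen hO1 using hO
  let W : Set X := Set.pi Set.univ O
  have hWopen : IsOpen W := isOpen_set_pi Set.finite_univ (fun i _ => hOopen i)
  have h1W : (1 : X) ∈ W := fun i _ => hO1 i
  have hW : ∀ g : A, φ g ∈ W → g = 1 := by
    intro g hg
    refine hVsep g fun χ hχ => ?_
    exact hOsub ⟨χ, hχ⟩ (hg ⟨χ, hχ⟩ trivial)
  obtain ⟨U, hUopen, hU1, hUU⟩ := exists_open_nhds_one_mul_subset (hWopen.mem_nhds h1W)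
  let Us : Set X := U ∩ U⁻¹
  have hUsopen : IsOpen Us := hUopen.inter hUopen.inv
  have hUs1 : (1 : X) ∈ Us := ⟨hU1, by simpa using hU1⟩
  have hpair : ∀ x y : X, x ∈ Us → y ∈ Us → x⁻¹ * y ∈ W := by
    intro x y hx hy
    exact hUU (Set.mul_mem_mul (Set.mem_inv.mp hx.2) hy.1)
  have hcov : (Set.univ : Set X) ⊆ ⋃ x : X, (fun y => x⁻¹ * y) ⁻¹' Us := by
    intro x _
    exact Set.mem_iUnion.mpr ⟨x, by show x⁻¹ * x ∈ Us; rw [inv_mul_cancel]; exact hUs1⟩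
  obtain ⟨t, ht⟩ := isCompact_univ.elim_finite_subcover (fun x : X => (fun y => x⁻¹ * y) ⁻¹' Us)
    (fun x => hUsopen.preimage (continuous_const.mul continuous_id)) hcov
  have hmem : ∀ b : A, ∃ x ∈ t, φ b ∈ (fun y => x⁻¹ * y) ⁻¹' Us := by
    intro b
    have := ht (Set.mem_univ (φ b))
    simpa using Set.mem_iUnion₂.mp this
  choose F hFt hFmem using hmem
  have hinjF : Function.Injective (fun b : A => (⟨F b, hFt b⟩ : {x // x ∈ t})) := by
    intro b b' hbb
    have hx : F b = F b' := congrArg Subtype.val hbb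
    have h1 : (F b)⁻¹ * φ b ∈ Us := hFmem b
    have h2 : (F b)⁻¹ * φ b' ∈ Us := hx ▸ hFmem b'
    have h3 : ((F b)⁻¹ * φ b)⁻¹ * ((F b)⁻¹ * φ b') ∈ W := hpair _ _ h1 h2
    have h4 : (φ b)⁻¹ * φ b' ∈ W := by
      have : ((F b)⁻¹ * φ b)⁻¹ * ((F b)⁻¹ * φ b') = (φ b)⁻¹ * φ b' := by rw [mul_inv_rev, mul_assoc, inv_mul_cancel_left]
      rwa [this] at h3
    have h5 : φ (b⁻¹ * b') ∈ W := by
      rw [map_mul, map_inv]; exact h4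
    have h6 := hW _ h5
    exact (inv_mul_eq_one.mp h6 : b = b')
  haveI hfinA : Finite A := Finite.of_injective _ hinjF
  have hbot : (⊥ : Subgroup A) = ⊤ := by
    refine hfi ⊥ ⟨?_⟩
    rw [Subgroup.index_bot]
    exact Nat.card_ne_zero.mpr ⟨⟨1⟩, hfinA⟩
  have : a ∈ (⊥ : Subgroup A) := hbot ▸ Subgroup.mem_top a
  exact Subgroup.mem_bot.mp this

lemma induced_bot_inj {H G : Type*} {f : H → G} (hf : Function.Injective f) :
    TopologicalSpace.induced f ⊥ = ⊥ := by
  letI : TopologicalSpace G := ⊥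
  haveI : DiscreteTopology G := ⟨rfl⟩
  refine eq_bot_of_singletons_open fun x => ?_
  refine isOpen_induced_iff.mpr ⟨{f x}, isOpen_discrete _, ?_⟩
  ext y
  simp [hf.eq_iff, eq_comm]

lemma nonTop_congr {G H : Type*} [Group G] [Group H] (e : G ≃* H)
    (hG : NonTopologizable G) : NonTopologizable H := by
  intro t htg ht2
  letI : TopologicalSpace H := t
  haveI : IsTopologicalGroup H := htg
  haveI : T2Space H := ht2
  letI tG : TopologicalSpace G := t.induced e
  haveI h1 : @IsTopologicalGroup G tG _ := topologicalGroup_induced (e : G ≃* H)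
  haveI h2 : @T2Space G tG := @T2Space.of_injective_continuous G H tG t _ _ e.injective
    continuous_induced_dom
  have hbot : tG = ⊥ := hG tG h1 h2
  have ht : t = TopologicalSpace.induced (⇑e.symm) tG := by
    show t = (t.induced ⇑e).induced ⇑e.symm
    rw [induced_compose]
    have he : (⇑e ∘ ⇑e.symm) = id := funext fun x => e.apply_symm_apply x
    rw [he, induced_id]
  rw [hbot] at ht
  rw [ht]
  exact induced_bot_inj e.symm.injective

theorem smallest_finite_index_subgroup_perfect {G : Type*} [Group G]
    (hG : HereditarilyNonTopologizable G) (H : Subgroup G) :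
    ∃ N : Subgroup ↥H, N.FiniteIndex ∧ (∀ K : Subgroup ↥H, K.FiniteIndex → N ≤ K) ∧
      N = ⁅N, N⁆ := by
  classical
  let M : Subgroup ↥H := ⨅ (N : Subgroup ↥H) (_ : N.Normal) (_ : N.FiniteIndex), N
  have hMmem : ∀ {g : ↥H}, g ∈ M ↔
      ∀ N : Subgroup ↥H, N.Normal → N.FiniteIndex → g ∈ N := by
    intro g
    simp only [M, Subgroup.mem_iInf]
  haveI hMnormal : M.Normal := by
    constructor
    intro n hn g
    exact hMmem.mpr fun N hN hFI => hN.conj_mem n (hMmem.mp hn N hN hFI) g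
  have hNT : NonTopologizable (↥H ⧸ M) := hG H M
  have hsep : ∀ q : ↥H ⧸ M,
      (∀ N' : Subgroup (↥H ⧸ M), N'.Normal → N'.FiniteIndex → q ∈ N') → q = 1 := by
    intro q hq
    induction q using QuotientGroup.induction_on with | H g =>
    rw [QuotientGroup.eq_one_iff]
    refine hMmem.mpr fun N hN hFI => ?_
    have hMN : M ≤ N := fun x hx => hMmem.mp hx N hN hFI
    have hNormal' : (N.map (QuotientGroup.mk' M)).Normal :=
      Subgroup.Normal.map hN _ (QuotientGroup.mk'_surjective M)
    have hFI' : (N.map (QuotientGroup.mk' M)).FiniteIndex := by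
      constructor
      rw [Subgroup.index_map, QuotientGroup.ker_mk', sup_eq_left.mpr hMN,
        MonoidHom.range_eq_top_of_surjective _ (QuotientGroup.mk'_surjective M),
        Subgroup.index_top, mul_one]
      exact hFI.index_ne_zero
    obtain ⟨n, hnN, hn⟩ := hq _ hNormal' hFI'
    obtain ⟨z, hzM, hz⟩ := (QuotientGroup.mk'_eq_mk' (N := M)).mp hn
    rw [← hz]
    exact N.mul_mem hnN (hMN hzM)
  haveI hQfin : Finite (↥H ⧸ M) := fin_of_profinite hNT hsep
  have hMfi : M.FiniteIndex := by
    constructor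
    rw [Subgroup.index_eq_card]
    exact Nat.card_ne_zero.mpr ⟨⟨1⟩, hQfin⟩
  have hMin : ∀ K : Subgroup ↥H, K.FiniteIndex → M ≤ K := by
    intro K hK
    haveI := hK
    have h0 : M ≤ K.normalCore := fun x hx =>
      hMmem.mp hx K.normalCore (Subgroup.normalCore_normal K) inferInstance
    exact h0.trans K.normalCore_le
  have hNoProper : ∀ P : Subgroup ↥M, P.FiniteIndex → P = ⊤ := by
    intro P hP
    have hle : P.map M.subtype ≤ M := Subgroup.map_subtype_le P
    have hco : (P.map M.subtype).subgroupOf M = P :=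
      Subgroup.comap_map_eq_self_of_injective M.subtype_injective P
    have hidx : (P.map M.subtype).FiniteIndex := by
      constructor
      rw [← Subgroup.relIndex_mul_index hle]
      have hrel : (P.map M.subtype).relIndex M = P.index := by
        rw [Subgroup.relIndex, hco]
      rw [hrel]
      exact mul_ne_zero hP.index_ne_zero hMfi.index_ne_zero
    have heq : P.map M.subtype = M := le_antisymm hle (hMin _ hidx)
    calc P = (P.map M.subtype).subgroupOf M := hco.symm
      _ = M.subgroupOf M := by rw [heq]
      _ = ⊤ := Subgroup.subgroupOf_self M
  refine ⟨M, hMfi, hMin, ?_⟩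
  have hcomm_le : ⁅M, M⁆ ≤ M := Subgroup.commutator_le.mpr fun a ha b hb => by
    rw [commutatorElement_def]
    exact M.mul_mem (M.mul_mem (M.mul_mem ha hb) (M.inv_mem ha)) (M.inv_mem hb)
  -- abelianization transport
  set M' : Subgroup G := M.map H.subtype with hM'
  let e : ↥M ≃* ↥M' := M.equivMapOfInjective H.subtype H.subtype_injective
  have hNT' : NonTopologizable (↥M' ⧸ commutator ↥M') := hG M' (commutator ↥M')
  have hmapD : (commutator ↥M).map e.toMonoidHom = commutator ↥M' := by
    rw [commutator_def, commutator_def, Subgroup.map_commutator]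
    have htop : (⊤ : Subgroup ↥M).map e.toMonoidHom = ⊤ := by
      rw [← MonoidHom.range_eq_map]
      exact MonoidHom.range_eq_top_of_surjective _ e.surjective
    rw [htop]
  have hNTD : NonTopologizable (↥M ⧸ commutator ↥M) :=
    nonTop_congr (QuotientGroup.congr (commutator ↥M) (commutator ↥M') e hmapD).symm hNT'
  letI : CommGroup (↥M ⧸ commutator ↥M) :=
    { (inferInstance : Group (↥M ⧸ commutator ↥M)) with
      mul_comm := by
        intro a b
        induction a using QuotientGroup.induction_on with | H x =>
        induction b using QuotientGroup.induction_on with | H y =>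
        show QuotientGroup.mk (x * y) = QuotientGroup.mk (y * x)
        rw [QuotientGroup.eq]
        have hc := Subgroup.commutator_mem_commutator
          (Subgroup.mem_top (y⁻¹)) (Subgroup.mem_top (x⁻¹))
        rw [commutatorElement_def] at hc
        rw [← commutator_def] at hc
        convert hc using 1
        group }
  have hfi' : ∀ K : Subgroup (↥M ⧸ commutator ↥M), K.FiniteIndex → K = ⊤ := by
    intro K hK
    have h1 : (K.comap (QuotientGroup.mk' (commutator ↥M))).FiniteIndex := by
      constructor
      rw [Subgroup.index_comap_of_surjective _ (QuotientGroup.mk'_surjective _)]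
      exact hK.index_ne_zero
    have h2 := hNoProper _ h1
    have h3 := congrArg (Subgroup.map (QuotientGroup.mk' (commutator ↥M))) h2
    rw [Subgroup.map_comap_eq_self_of_surjective (QuotientGroup.mk'_surjective _)] at h3
    rw [h3, ← MonoidHom.range_eq_map]
    exact MonoidHom.range_eq_top_of_surjective _ (QuotientGroup.mk'_surjective _)
  have htriv := comm_nontop_trivial hNTD hfi'
  have hDtop : commutator ↥M = ⊤ := by
    rw [eq_top_iff]
    intro x _
    exact (QuotientGroup.eq_one_iff x).mp (htriv (QuotientGroup.mk x))
  have hmt : (⊤ : Subgroup ↥M).map M.subtype = M := by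
    rw [← MonoidHom.range_eq_map, Subgroup.range_subtype]
  calc M = (⊤ : Subgroup ↥M).map M.subtype := hmt.symm
    _ = (commutator ↥M).map M.subtype := by rw [hDtop]
    _ = ⁅(⊤ : Subgroup ↥M).map M.subtype, (⊤ : Subgroup ↥M).map M.subtype⁆ := by
        rw [commutator_def, Subgroup.map_commutator]
    _ = ⁅M, M⁆ := by rw [hmt]
end

section
/- Let G be a hereditarily non-topologizable group and let H be a subgroup of G. Then for every natural number k, the k-th derived subgroup H^(k) has finite index in H. -/
noncomputable def ratCircleToReal : AddCircle (1 : ℚ) →+ AddCircle (1 : ℝ) :=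
  QuotientAddGroup.map (AddSubgroup.zmultiples (1 : ℚ)) (AddSubgroup.zmultiples (1 : ℝ))
    (Rat.castHom ℝ).toAddMonoidHom (by
      intro x hx
      obtain ⟨n, rfl⟩ := AddSubgroup.mem_zmultiples_iff.mp hx
      refine AddSubgroup.mem_zmultiples_iff.mpr ⟨n, ?_⟩
      simp)

lemma ratCircleToReal_injective : Function.Injective ratCircleToReal := by
  intro x y h
  induction x using QuotientAddGroup.induction_on with | H qx =>
  induction y using QuotientAddGroup.induction_on with | H qy =>
  have h2 : ((qx : ℝ) : AddCircle (1:ℝ)) = ((qy : ℝ) : AddCircle (1:ℝ)) := h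
  rw [QuotientAddGroup.eq] at h2 ⊢
  obtain ⟨n, hn⟩ := AddSubgroup.mem_zmultiples_iff.mp h2
  refine AddSubgroup.mem_zmultiples_iff.mpr ⟨n, ?_⟩
  rw [zsmul_eq_mul, mul_one] at hn
  have h3 : ((n : ℝ)) = ((-qx + qy : ℚ) : ℝ) := by push_cast; linarith
  rw [zsmul_eq_mul, mul_one]
  exact_mod_cast h3

lemma finite_of_addNonTop (A : Type*) [AddCommGroup A]
    (h : ∀ t : TopologicalSpace A, @IsTopologicalAddGroup A t _ → @T2Space A t → t = ⊥) :
    Finite A := by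
  haveI : Fact ((0:ℝ) < 1) := ⟨one_pos⟩
  set C := CharacterModule A → AddCircle (1 : ℝ) with hC
  let f : A →+ C :=
    { toFun := fun a c => ratCircleToReal (c a)
      map_zero' := by funext c; show ratCircleToReal (c 0) = 0; simp
      map_add' := by intro a b; funext c; show _ = ratCircleToReal (c a) + ratCircleToReal (c b); simp }
  have hfinj : Function.Injective f := by
    rw [injective_iff_map_eq_zero]
    intro a ha
    by_contra hne
    obtain ⟨c, hc⟩ := CharacterModule.exists_character_apply_ne_zero_of_ne_zero hne
    apply hc
    apply ratCircleToReal_injective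
    rw [map_zero]
    exact congrFun ha c
  letI tA : TopologicalSpace A := TopologicalSpace.induced f inferInstance
  haveI htg : @IsTopologicalAddGroup A tA _ := topologicalAddGroup_induced f
  haveI ht2 : @T2Space A tA := (Topology.IsEmbedding.mk ⟨rfl⟩ hfinj).t2Space
  have hbot : tA = ⊥ := h tA htg ht2
  -- range of f is a discrete subgroup of the compact group C
  set S : AddSubgroup C := f.range with hS
  haveI : DiscreteTopology ↥S := by
    apply discreteTopology_iff_isOpen_singleton.mpr
    rintro ⟨x, a, rfl⟩
    have hopen : @IsOpen A tA {a} := by rw [hbot]; trivial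
    obtain ⟨U, hU, hUeq⟩ := isOpen_induced_iff.mp hopen
    rw [isOpen_induced_iff]
    refine ⟨U, hU, ?_⟩
    ext ⟨y, b, rfl⟩
    simp only [Set.mem_preimage, Set.mem_singleton_iff, Subtype.mk_eq_mk]
    constructor
    · intro hb
      have : b ∈ f ⁻¹' U := hb
      rw [hUeq] at this
      rw [this]
    · intro hb
      have : a ∈ f ⁻¹' U := by rw [hUeq]; rfl
      rw [show f b = f a from congrArg Subtype.val hb]; exact this
  have hclosed : IsClosed (S : Set C) := AddSubgroup.isClosed_of_discrete
  have hcompact : IsCompact (S : Set C) := hclosed.isCompact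
  haveI : CompactSpace ↥S := isCompact_iff_compactSpace.mp hcompact
  haveI : Finite ↥S := finite_of_compact_of_discrete
  exact Finite.of_injective (fun a => (⟨f a, ⟨a, rfl⟩⟩ : ↥S))
    (fun a b hab => hfinj (congrArg Subtype.val hab))

lemma NonTopologizable.congr {K K' : Type*} [Group K] [Group K'] (e : K ≃* K')
    (h : NonTopologizable K) : NonTopologizable K' := by
  intro t' htg' ht2'
  letI t : TopologicalSpace K := t'.induced e
  haveI htg : @IsTopologicalGroup K t _ := topologicalGroup_induced e
  haveI ht2 : @T2Space K t := (Topology.IsEmbedding.mk ⟨rfl⟩ e.injective).t2Space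
  have hbot : t = ⊥ := h t htg ht2
  have hall : ∀ s : Set K', @IsOpen K' t' s := by
    intro s
    have hopen : @IsOpen K t (⇑e ⁻¹' s) := by rw [hbot]; trivial
    obtain ⟨V, hV, hVeq⟩ := (@isOpen_induced_iff K K' t' _ _).mp hopen
    have : V = s := Function.Surjective.preimage_injective e.surjective hVeq
    rwa [← this]
  haveI : @DiscreteTopology K' t' := discreteTopology_iff_forall_isOpen.mpr hall
  exact DiscreteTopology.eq_bot

lemma finite_of_commNonTop {Q : Type*} [CommGroup Q] (h : NonTopologizable Q) : Finite Q := by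
  have hfin : Finite (Additive Q) := by
    apply finite_of_addNonTop
    intro t htg ht2
    letI tq : TopologicalSpace Q := t
    haveI hq : @IsTopologicalGroup Q tq _ :=
      { continuous_mul := htg.toContinuousAdd.continuous_add
        continuous_inv := htg.toContinuousNeg.continuous_neg }
    exact h tq hq ht2
  exact Finite.of_equiv _ Additive.toMul

theorem derivedSeries_finiteIndex {G : Type*} [Group G]
    (hG : HereditarilyNonTopologizable G) (H : Subgroup G) (k : ℕ) :
    (derivedSeries ↥H k).FiniteIndex := by
  induction k with
  | zero => rw [derivedSeries_zero]; infer_instance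
  | succ k ih =>
    set D : Subgroup ↥H := derivedSeries ↥H k with hD
    haveI hDn : D.Normal := derivedSeries_normal _ _
    set D' : Subgroup G := D.map H.subtype with hD'
    let e : ↥D ≃* ↥D' := D.equivMapOfInjective H.subtype H.subtype_injective
    have hmap : (commutator ↥D).map (e : ↥D →* ↥D') = commutator ↥D' := by
      rw [commutator_def, Subgroup.map_commutator,
        Subgroup.map_top_of_surjective _ e.surjective, commutator_def]
    have hnt' : NonTopologizable (↥D' ⧸ commutator ↥D') := hG D' (commutator ↥D')
    have hnt : NonTopologizable (↥D ⧸ commutator ↥D) :=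
      NonTopologizable.congr
        (QuotientGroup.congr (commutator ↥D) (commutator ↥D') e hmap).symm hnt'
    haveI hfin : Finite (↥D ⧸ commutator ↥D) :=
      finite_of_commNonTop (Q := Abelianization ↥D) hnt
    have hsub : (⁅D, D⁆).subgroupOf D = commutator ↥D := by
      have hm : Subgroup.map D.subtype (commutator ↥D) = ⁅D, D⁆ := by
        rw [commutator_def, Subgroup.map_commutator, ← MonoidHom.range_eq_map, D.range_subtype]
      rw [← hm]
      exact Subgroup.comap_map_eq_self_of_injective D.subtype_injective _
    have hle : ⁅D, D⁆ ≤ D := Subgroup.commutator_le_left D D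
    rw [derivedSeries_succ, ← hD]
    refine ⟨?_⟩
    rw [← Subgroup.relIndex_mul_index hle]
    apply Nat.mul_ne_zero
    · show ((⁅D, D⁆).subgroupOf D).index ≠ 0
      rw [hsub]
      exact Subgroup.index_ne_zero_of_finite
    · exact ih.index_ne_zero
end

section
/- Let G be a hereditarily non-topologizable group and let H be a subgroup of G. Then there exists a natural number n such that H^(n) = H^(n+1), where H^(k) denotes the k-th derived subgroup of H. -/
/-- A group with a strictly descending chain of nontrivial normal subgroups with trivial
intersection admits a nondiscrete Hausdorff group topology. -/
lemma not_nonTopologizable_of_chain {Q : Type*} [Group Q] (D : ℕ → Subgroup Q)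
    (hnorm : ∀ n, (D n).Normal) (hanti : ∀ n, D (n + 1) ≤ D n)
    (hne : ∀ n, D n ≠ ⊥) (hinf : (⨅ n, D n) = ⊥) : ¬ NonTopologizable Q := by
  have hmono : ∀ {m n : ℕ}, m ≤ n → D n ≤ D m := by
    intro m n h
    induction h with
    | refl => exact le_rfl
    | step h ih => exact le_trans (hanti _) ih
  -- build the group filter basis from the subgroups
  let B : GroupFilterBasis Q :=
  { sets := Set.range (fun n => ((D n : Subgroup Q) : Set Q))
    nonempty := ⟨_, ⟨0, rfl⟩⟩
    inter_sets := by
      rintro _ _ ⟨m, rfl⟩ ⟨n, rfl⟩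
      exact ⟨_, ⟨max m n, rfl⟩,
        Set.subset_inter (hmono (le_max_left m n)) (hmono (le_max_right m n))⟩
    one' := by rintro _ ⟨n, rfl⟩; exact (D n).one_mem
    mul' := by
      rintro _ ⟨n, rfl⟩
      exact ⟨_, ⟨n, rfl⟩, Set.mul_subset_iff.2 fun x hx y hy => (D n).mul_mem hx hy⟩
    inv' := by
      rintro _ ⟨n, rfl⟩
      exact ⟨_, ⟨n, rfl⟩, fun x hx => (D n).inv_mem hx⟩
    conj' := by
      rintro x₀ _ ⟨n, rfl⟩
      exact ⟨_, ⟨n, rfl⟩, fun x hx => (hnorm n).conj_mem x hx x₀⟩ }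
  intro hNT
  letI t := B.topology
  haveI htg : @IsTopologicalGroup Q t _ := B.isTopologicalGroup
  have ht2 : @T2Space Q t := by
    apply @IsTopologicalGroup.t2Space_of_one_sep Q t _ htg
    intro x hx
    have hx' : x ∉ (⨅ n, D n : Subgroup Q) := by
      rw [hinf]; simpa using hx
    rw [Subgroup.mem_iInf] at hx'
    push_neg at hx'
    obtain ⟨n, hn⟩ := hx'
    exact ⟨(D n : Set Q), B.mem_nhds_one ⟨n, rfl⟩, hn⟩
  have hbot : t = ⊥ := hNT t htg ht2
  -- in the discrete topology, {1} is a neighborhood of 1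
  have h1 : ({1} : Set Q) ∈ @nhds Q t 1 := by
    rw [hbot, congrFun (@nhds_discrete Q ⊥ (discreteTopology_bot Q)) 1]
    exact Filter.mem_pure.2 (Set.mem_singleton 1)
  obtain ⟨V, hV, hVsub⟩ := (B.nhds_one_hasBasis).mem_iff.mp h1
  obtain ⟨n, rfl⟩ := hV
  apply hne n
  rw [Subgroup.eq_bot_iff_forall]
  intro x hx
  exact hVsub hx

theorem derivedSeries_stabilizes {G : Type*} [Group G]
    (hG : HereditarilyNonTopologizable G) (H : Subgroup G) :
    ∃ n : ℕ, derivedSeries ↥H n = derivedSeries ↥H (n + 1) := by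
  by_contra hc
  push_neg at hc
  set D := derivedSeries ↥H with hD
  have hDnorm : ∀ n, (D n).Normal := fun n => derivedSeries_normal ↥H n
  have hDanti : ∀ n, D (n + 1) ≤ D n := by
    intro n
    haveI := hDnorm n
    rw [hD, derivedSeries_succ]
    exact Subgroup.commutator_le_left _ _
  set N : Subgroup ↥H := ⨅ n, D n with hN
  have hNle : ∀ n, N ≤ D n := fun n => iInf_le _ n
  haveI hNnorm : N.Normal := by
    constructor
    intro x hx g
    rw [Subgroup.mem_iInf] at hx ⊢
    exact fun n => (hDnorm n).conj_mem x (hx n) g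
  have hQ := hG H N
  set φ := QuotientGroup.mk' N with hφ
  have hφsurj : Function.Surjective φ := QuotientGroup.mk'_surjective N
  set Dq : ℕ → Subgroup (↥H ⧸ N) := fun n => (D n).map φ with hDq
  have hker : φ.ker = N := QuotientGroup.ker_mk' N
  refine not_nonTopologizable_of_chain Dq ?_ ?_ ?_ ?_ hQ
  · exact fun n => (hDnorm n).map φ hφsurj
  · exact fun n => Subgroup.map_mono (hDanti n)
  · intro n hbot
    rw [hDq] at hbot
    rw [Subgroup.map_eq_bot_iff, hker] at hbot
    exact hc n (le_antisymm (le_trans hbot (hNle (n + 1))) (hDanti n))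
  · rw [Subgroup.eq_bot_iff_forall]
    intro x hx
    obtain ⟨y, rfl⟩ := hφsurj x
    rw [Subgroup.mem_iInf] at hx
    have hy : y ∈ N := by
      rw [hN, Subgroup.mem_iInf]
      intro n
      obtain ⟨z, hz, hzy⟩ := hx n
      have : z⁻¹ * y ∈ φ.ker := by
        rw [MonoidHom.mem_ker, map_mul, map_inv, hzy, inv_mul_cancel]
      rw [hker] at this
      have := hNle n this
      simpa using (D n).mul_mem hz this
    rw [← hker, MonoidHom.mem_ker] at hy
    exact hy
end

section
/- A countable group G, equipped with the discrete topology, is c-compact if and only if G is hereditarily non-topologizable. -/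
universe u

def CCompact (G : Type u) [Group G] [TopologicalSpace G] : Prop :=
  ∀ (H : Type u) [Group H] [TopologicalSpace H] [IsTopologicalGroup H] [T2Space H]
    (S : Subgroup (G × H)), IsClosed (S : Set (G × H)) →
      IsClosed (Prod.snd '' (S : Set (G × H)))

open Filter Set Function
open scoped Topology

structure GoodScale (Q : Type*) [Group Q] (e : ℕ → Q) where
  U : ℕ → Set Q
  one_mem : ∀ k, (1 : Q) ∈ U k
  symm : ∀ k, ∀ v ∈ U k, v⁻¹ ∈ U k
  mul_sub : ∀ k, ∀ v ∈ U (k + 1), ∀ w ∈ U (k + 1), v * w ∈ U k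
  anti : ∀ k, U (k + 1) ⊆ U k
  conjE : ∀ i k : ℕ, ∃ j, ∀ v ∈ U j, e i * v * (e i)⁻¹ ∈ U k
  sep : ∀ q : Q, q ≠ 1 → ∃ k, q ∉ U k
  infinite : ∀ k, (U k).Infinite

lemma infinite_of_mem_nhds_one {Q : Type*} [Group Q] [ts : TopologicalSpace Q]
    [IsTopologicalGroup Q] [T1Space Q] (hne : ts ≠ ⊥) {V : Set Q} (hV : V ∈ 𝓝 (1 : Q)) :
    V.Infinite := by
  by_contra hfin
  rw [Set.not_infinite] at hfin
  apply hne
  have hFin : (V \ {1}).Finite := hfin.diff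
  have h1 : {(1 : Q)} ∈ 𝓝 (1 : Q) := by
    have hmem : V ∩ ⋂ x ∈ V \ {1}, ({x}ᶜ : Set Q) ∈ 𝓝 (1 : Q) := by
      refine Filter.inter_mem hV ?_
      rw [Filter.biInter_mem hFin]
      intro x hx
      refine IsOpen.mem_nhds isOpen_compl_singleton ?_
      simp only [Set.mem_compl_iff, Set.mem_singleton_iff]
      intro h
      exact hx.2 (by simp [← h])
    refine Filter.mem_of_superset hmem ?_
    rintro y ⟨hyV, hyI⟩
    by_contra hy1
    have hyd : y ∈ V \ {1} := ⟨hyV, hy1⟩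
    have := Set.mem_iInter₂.1 hyI y hyd
    simp at this
  have hopen1 : IsOpen ({(1 : Q)} : Set Q) := by
    rcases mem_nhds_iff.1 h1 with ⟨O, hOsub, hOopen, hO1⟩
    have hOeq : O = {(1 : Q)} :=
      Set.Subset.antisymm hOsub (by
        intro y hy
        rw [Set.mem_singleton_iff] at hy
        rwa [hy])
    rwa [← hOeq]
  apply eq_bot_of_singletons_open
  intro x
  have himg := (Homeomorph.mulLeft x).isOpen_image.2 hopen1
  simpa using himg

theorem exists_goodScale {Q : Type*} [Group Q] [t : TopologicalSpace Q]
    [IsTopologicalGroup Q] [T2Space Q] (hne : t ≠ ⊥) (e : ℕ → Q) (he : Surjective e) :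
    Nonempty (GoodScale Q e) := by
  classical
  have step : ∀ W : Set Q, W ∈ 𝓝 (1 : Q) → ∀ n : ℕ,
      ∃ V : Set Q, V ∈ 𝓝 (1 : Q) ∧ (∀ v ∈ V, v⁻¹ ∈ V) ∧ (∀ v ∈ V, ∀ w ∈ V, v * w ∈ W) ∧
        (∀ i ≤ n, ∀ v ∈ V, e i * v * (e i)⁻¹ ∈ W) ∧ (e n ≠ 1 → e n ∉ V) := by
    intro W hW n
    obtain ⟨V₁, hV₁, hV₁m⟩ := exists_nhds_one_split hW
    have hconj : ∀ i : ℕ, (fun x : Q => e i * x * (e i)⁻¹) ⁻¹' W ∈ 𝓝 (1 : Q) := by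
      intro i
      have hc : Continuous (fun x : Q => e i * x * (e i)⁻¹) :=
        (continuous_const.mul continuous_id).mul continuous_const
      have h1 : (fun x : Q => e i * x * (e i)⁻¹) 1 = 1 := by simp
      exact hc.continuousAt.preimage_mem_nhds (by simpa using hW)
    set V₂ : Set Q := V₁ ∩ ⋂ i ∈ Finset.range (n + 1), (fun x : Q => e i * x * (e i)⁻¹) ⁻¹' W
      with hV₂def
    have hV₂ : V₂ ∈ 𝓝 (1 : Q) :=
      Filter.inter_mem hV₁ ((Filter.biInter_finset_mem _).2 fun i _ => hconj i)
    have hV₂sub : V₂ ⊆ V₁ := Set.inter_subset_left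
    have hV₂conj : ∀ i ≤ n, ∀ v ∈ V₂, e i * v * (e i)⁻¹ ∈ W := by
      intro i hi v hv
      have hv2 := hv.2
      rw [Set.mem_iInter₂] at hv2
      exact hv2 i (Finset.mem_range.2 (Nat.lt_succ_of_le hi))
    set V₃ : Set Q := if e n = 1 then V₂ else V₂ ∩ ({e n}ᶜ ∩ {(e n)⁻¹}ᶜ) with hV₃def
    have hV₃ : V₃ ∈ 𝓝 (1 : Q) := by
      rw [hV₃def]
      split_ifs with h
      · exact hV₂
      · refine Filter.inter_mem hV₂ (Filter.inter_mem ?_ ?_)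
        · exact IsOpen.mem_nhds isOpen_compl_singleton
            (by simp only [Set.mem_compl_iff, Set.mem_singleton_iff]; exact fun hh => h hh.symm)
        · exact IsOpen.mem_nhds isOpen_compl_singleton
            (by simp only [Set.mem_compl_iff, Set.mem_singleton_iff];
                exact fun hh => h (by rw [← inv_inv (e n), ← hh, inv_one]))
    have hV₃sub : V₃ ⊆ V₂ := by
      rw [hV₃def]; split_ifs
      · exact subset_rfl
      · exact Set.inter_subset_left
    refine ⟨V₃ ∩ V₃⁻¹, Filter.inter_mem hV₃ (inv_mem_nhds_one Q hV₃), ?_, ?_, ?_, ?_⟩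
    · rintro v ⟨hv1, hv2⟩
      exact ⟨Set.mem_inv.1 hv2, by rwa [Set.mem_inv, inv_inv]⟩
    · intro v hv w hw
      exact hV₁m v (hV₂sub (hV₃sub hv.1)) w (hV₂sub (hV₃sub hw.1))
    · intro i hi v hv
      exact hV₂conj i hi v (hV₃sub hv.1)
    · intro hn hmem
      have h3 : e n ∈ V₃ := hmem.1
      rw [hV₃def, if_neg hn] at h3
      exact h3.2.1 rfl
  choose! F hF1 hF2 hF3 hF4 hF5 using step
  let Ub : ℕ → {V : Set Q // V ∈ 𝓝 (1 : Q)} := fun n =>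
    Nat.rec ⟨Set.univ, Filter.univ_mem⟩ (fun k ih => ⟨F ih.1 k, hF1 ih.1 ih.2 k⟩) n
  let U : ℕ → Set Q := fun n => (Ub n).1
  have hUnhds : ∀ k, U k ∈ 𝓝 (1 : Q) := fun k => (Ub k).2
  have hUsucc : ∀ k, U (k + 1) = F (U k) k := fun k => rfl
  have hsymm : ∀ k, ∀ v ∈ U (k + 1), v⁻¹ ∈ U (k + 1) := by
    intro k
    rw [hUsucc k]
    exact hF2 (U k) (hUnhds k) k
  have hmul : ∀ k, ∀ v ∈ U (k + 1), ∀ w ∈ U (k + 1), v * w ∈ U k := by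
    intro k
    rw [hUsucc k]
    exact hF3 (U k) (hUnhds k) k
  have hconj' : ∀ k, ∀ i ≤ k, ∀ v ∈ U (k + 1), e i * v * (e i)⁻¹ ∈ U k := by
    intro k
    rw [hUsucc k]
    exact hF4 (U k) (hUnhds k) k
  have havoid : ∀ k, e k ≠ 1 → e k ∉ U (k + 1) := by
    intro k
    rw [hUsucc k]
    exact hF5 (U k) (hUnhds k) k
  have hanti : ∀ k, U (k + 1) ⊆ U k := by
    intro k v hv
    have := hmul k v hv 1 (mem_of_mem_nhds (hUnhds (k + 1)))
    rwa [mul_one] at this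
  have hanti' : ∀ {k l : ℕ}, k ≤ l → U l ⊆ U k := by
    intro k l hkl
    induction hkl with
    | refl => exact subset_rfl
    | step h ih => exact fun x hx => ih (hanti _ hx)
  -- shift everything by one to make symmetry etc hold at every level
  refine ⟨⟨fun k => U (k + 1), ?_, ?_, ?_, ?_, ?_, ?_, ?_⟩⟩
  · exact fun k => mem_of_mem_nhds (hUnhds (k + 1))
  · exact fun k => hsymm k
  · exact fun k v hv w hw => hmul (k + 1) v hv w hw
  · exact fun k => hanti (k + 1)
  · intro i k
    refine ⟨max i (k + 1), ?_⟩
    intro v hv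
    have h1 : max i (k + 1) + 1 = max i (k + 1) + 1 := rfl
    have h2 : e i * v * (e i)⁻¹ ∈ U (max i (k + 1)) := by
      apply hconj' (max i (k + 1)) i (le_max_left _ _) v
      exact hv
    exact hanti' (Nat.succ_le_of_lt (Nat.lt_of_lt_of_le (Nat.lt_succ_self k) (le_max_right i (k + 1)))) h2
  · intro q hq
    obtain ⟨n, rfl⟩ : ∃ n, e n = q := he q
    exact ⟨n, havoid n hq⟩
  · intro k
    exact infinite_of_mem_nhds_one hne (hUnhds (k + 1))

namespace GoodScale

variable {Q : Type*} [Group Q] {e : ℕ → Q} (C : GoodScale Q e)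

lemma anti' {k l : ℕ} (h : k ≤ l) : C.U l ⊆ C.U k := by
  induction h with
  | refl => exact subset_rfl
  | step h ih => exact fun x hx => ih (C.anti _ hx)

lemma mul2 {k : ℕ} {v w : Q} (hv : v ∈ C.U (k + 1)) (hw : w ∈ C.U (k + 1)) :
    v * w ∈ C.U k := C.mul_sub k v hv w hw

lemma mul3 {k : ℕ} {v w z : Q} (hv : v ∈ C.U (k + 2)) (hw : w ∈ C.U (k + 2))
    (hz : z ∈ C.U (k + 2)) : v * w * z ∈ C.U k :=
  C.mul2 (C.mul2 hv hw) (C.anti _ hz)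

lemma conj (he : Surjective e) (g : Q) (k : ℕ) :
    ∃ j, ∀ v ∈ C.U j, g * v * g⁻¹ ∈ C.U k := by
  obtain ⟨i, rfl⟩ := he g
  exact C.conjE i k

def IsCau (x : ℕ → Q) : Prop :=
  ∀ k, ∃ N, ∀ m, N ≤ m → ∀ n, N ≤ n → (x m)⁻¹ * x n ∈ C.U k ∧ x n * (x m)⁻¹ ∈ C.U k

lemma isCau_const (q : Q) : C.IsCau (fun _ => q) := by
  intro k
  refine ⟨0, fun m _ n _ => ?_⟩
  constructor
  · simpa using C.one_mem k
  · simpa using C.one_mem k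

lemma tail_conj_left (he : Surjective e) {x : ℕ → Q} (hx : C.IsCau x) (k : ℕ) :
    ∃ j N, ∀ m, N ≤ m → ∀ w ∈ C.U j, (x m)⁻¹ * w * x m ∈ C.U k := by
  obtain ⟨N, hN⟩ := hx (k + 2)
  obtain ⟨j, hj⟩ := C.conj he (x N)⁻¹ (k + 2)
  refine ⟨j, N, fun m hm w hw => ?_⟩
  have hs : (x N)⁻¹ * x m ∈ C.U (k + 2) := (hN N le_rfl m hm).1
  have hb : (x N)⁻¹ * w * ((x N)⁻¹)⁻¹ ∈ C.U (k + 2) := hj w hw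
  have hexp : (x m)⁻¹ * w * x m
      = ((x N)⁻¹ * x m)⁻¹ * ((x N)⁻¹ * w * ((x N)⁻¹)⁻¹) * ((x N)⁻¹ * x m) := by
    group
  rw [hexp]
  exact C.mul3 (C.symm _ _ hs) hb hs

lemma tail_conj_right (he : Surjective e) {x : ℕ → Q} (hx : C.IsCau x) (k : ℕ) :
    ∃ j N, ∀ m, N ≤ m → ∀ w ∈ C.U j, x m * w * (x m)⁻¹ ∈ C.U k := by
  obtain ⟨N, hN⟩ := hx (k + 2)
  obtain ⟨j, hj⟩ := C.conj he (x N) (k + 2)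
  refine ⟨j, N, fun m hm w hw => ?_⟩
  have hs : x m * (x N)⁻¹ ∈ C.U (k + 2) := (hN N le_rfl m hm).2
  have hb : x N * w * (x N)⁻¹ ∈ C.U (k + 2) := hj w hw
  have hexp : x m * w * (x m)⁻¹
      = (x m * (x N)⁻¹) * (x N * w * (x N)⁻¹) * (x m * (x N)⁻¹)⁻¹ := by
    group
  rw [hexp]
  exact C.mul3 hs hb (C.symm _ _ hs)

lemma isCau_mul (he : Surjective e) {x y : ℕ → Q} (hx : C.IsCau x) (hy : C.IsCau y) :
    C.IsCau (fun n => x n * y n) := by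
  intro k
  obtain ⟨j₁, N₁, h₁⟩ := C.tail_conj_left he hy (k + 1)
  obtain ⟨N₂, h₂⟩ := hx j₁
  obtain ⟨N₃, h₃⟩ := hy (k + 1)
  obtain ⟨j₂, N₄, h₄⟩ := C.tail_conj_right he hx (k + 1)
  obtain ⟨N₅, h₅⟩ := hy j₂
  obtain ⟨N₆, h₆⟩ := hx (k + 1)
  refine ⟨max (max (max N₁ N₂) N₃) (max (max N₄ N₅) N₆), fun m hm n hn => ?_⟩
  have hmN₁ : N₁ ≤ m := le_trans (le_trans (le_max_left _ _) (le_max_left _ _)) (le_trans (le_max_left _ _) hm)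
  have hmN₂ : N₂ ≤ m := le_trans (le_trans (le_max_right _ _) (le_max_left _ _)) (le_trans (le_max_left _ _) hm)
  have hmN₃ : N₃ ≤ m := le_trans (le_max_right _ _) (le_trans (le_max_left _ _) hm)
  have hmN₄ : N₄ ≤ m := le_trans (le_trans (le_max_left _ _) (le_max_left _ _)) (le_trans (le_max_right _ _) hm)
  have hmN₅ : N₅ ≤ m := le_trans (le_trans (le_max_right _ _) (le_max_left _ _)) (le_trans (le_max_right _ _) hm)
  have hmN₆ : N₆ ≤ m := le_trans (le_max_right _ _) (le_trans (le_max_right _ _) hm)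
  have hnN₁ : N₁ ≤ n := le_trans (le_trans (le_max_left _ _) (le_max_left _ _)) (le_trans (le_max_left _ _) hn)
  have hnN₂ : N₂ ≤ n := le_trans (le_trans (le_max_right _ _) (le_max_left _ _)) (le_trans (le_max_left _ _) hn)
  have hnN₃ : N₃ ≤ n := le_trans (le_max_right _ _) (le_trans (le_max_left _ _) hn)
  have hnN₄ : N₄ ≤ n := le_trans (le_trans (le_max_left _ _) (le_max_left _ _)) (le_trans (le_max_right _ _) hn)
  have hnN₅ : N₅ ≤ n := le_trans (le_trans (le_max_right _ _) (le_max_left _ _)) (le_trans (le_max_right _ _) hn)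
  have hnN₆ : N₆ ≤ n := le_trans (le_max_right _ _) (le_trans (le_max_right _ _) hn)
  constructor
  · have e1 : (y m)⁻¹ * ((x m)⁻¹ * x n) * y m ∈ C.U (k + 1) :=
      h₁ m hmN₁ _ (h₂ m hmN₂ n hnN₂).1
    have e2 : (y m)⁻¹ * y n ∈ C.U (k + 1) := (h₃ m hmN₃ n hnN₃).1
    have hexp : (x m * y m)⁻¹ * (x n * y n)
        = ((y m)⁻¹ * ((x m)⁻¹ * x n) * y m) * ((y m)⁻¹ * y n) := by
      group
    rw [hexp]
    exact C.mul2 e1 e2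
  · have e1 : x n * (y n * (y m)⁻¹) * (x n)⁻¹ ∈ C.U (k + 1) :=
      h₄ n hnN₄ _ (h₅ m hmN₅ n hnN₅).2
    have e2 : x n * (x m)⁻¹ ∈ C.U (k + 1) := (h₆ m hmN₆ n hnN₆).2
    have hexp : (x n * y n) * (x m * y m)⁻¹
        = (x n * (y n * (y m)⁻¹) * (x n)⁻¹) * (x n * (x m)⁻¹) := by
      group
    rw [hexp]
    exact C.mul2 e1 e2

lemma isCau_inv {x : ℕ → Q} (hx : C.IsCau x) : C.IsCau (fun n => (x n)⁻¹) := by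
  intro k
  obtain ⟨N, hN⟩ := hx k
  refine ⟨N, fun m hm n hn => ?_⟩
  constructor
  · have := (hN n hn m hm).2
    simpa [mul_assoc] using this
  · have := (hN n hn m hm).1
    simpa [mul_assoc] using this

def cauSub (he : Surjective e) : Subgroup (ℕ → Q) where
  carrier := {x | C.IsCau x}
  one_mem' := C.isCau_const 1
  mul_mem' := by
    intro x y hx hy
    exact C.isCau_mul he hx hy
  inv_mem' := by
    intro x hx
    exact C.isCau_inv hx

end GoodScale

namespace GoodScale

variable {Q : Type*} [Group Q] {e : ℕ → Q} (C : GoodScale Q e) (he : Surjective e)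

def Vset (k : ℕ) : Set ↥(C.cauSub he) :=
  {x | ∀ᶠ n in Filter.atTop, (x : ℕ → Q) n ∈ C.U k}

lemma Vset_anti {k l : ℕ} (h : k ≤ l) : C.Vset he l ⊆ C.Vset he k :=
  fun _ hx => hx.mono fun _ hn => C.anti' h hn

def gfb : GroupFilterBasis ↥(C.cauSub he) where
  sets := Set.range (C.Vset he)
  nonempty := ⟨C.Vset he 0, 0, rfl⟩
  inter_sets := by
    rintro _ _ ⟨k, rfl⟩ ⟨l, rfl⟩
    exact ⟨C.Vset he (max k l), ⟨max k l, rfl⟩,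
      Set.subset_inter (C.Vset_anti he (le_max_left _ _)) (C.Vset_anti he (le_max_right _ _))⟩
  one' := by
    rintro U ⟨k, rfl⟩
    exact Filter.Eventually.of_forall fun n => C.one_mem k
  mul' := by
    rintro U ⟨k, rfl⟩
    refine ⟨C.Vset he (k + 1), ⟨k + 1, rfl⟩, ?_⟩
    rintro z ⟨x, hx, y, hy, rfl⟩
    exact (hx.and hy).mono fun n hn => C.mul2 hn.1 hn.2
  inv' := by
    rintro U ⟨k, rfl⟩
    refine ⟨C.Vset he k, ⟨k, rfl⟩, ?_⟩
    intro x hx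
    exact hx.mono fun n hn => C.symm _ _ hn
  conj' := by
    intro x₀
    rintro U ⟨k, rfl⟩
    obtain ⟨j, N, hj⟩ := C.tail_conj_right he x₀.2 k
    refine ⟨C.Vset he j, ⟨j, rfl⟩, ?_⟩
    intro y hy
    show ∀ᶠ n in Filter.atTop, ((x₀ * y * x₀⁻¹ : ↥(C.cauSub he)) : ℕ → Q) n ∈ C.U k
    exact (hy.and (Filter.eventually_ge_atTop N)).mono fun n hn => hj n hn.2 _ hn.1

def znull : Subgroup ↥(C.cauSub he) where
  carrier := {x | ∀ k, ∀ᶠ n in Filter.atTop, (x : ℕ → Q) n ∈ C.U k}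
  one_mem' := fun k => Filter.Eventually.of_forall fun n => C.one_mem k
  mul_mem' := by
    intro x y hx hy k
    exact ((hx (k + 1)).and (hy (k + 1))).mono fun n hn => C.mul2 hn.1 hn.2
  inv_mem' := by
    intro x hx k
    exact (hx k).mono fun n hn => C.symm _ _ hn

lemma znull_normal : (C.znull he).Normal := by
  constructor
  intro z hz x k
  obtain ⟨j, N, hj⟩ := C.tail_conj_right he x.2 k
  exact ((hz j).and (Filter.eventually_ge_atTop N)).mono fun n hn => hj n hn.2 _ hn.1

def constHom : Q →* ↥(C.cauSub he) where
  toFun q := ⟨fun _ => q, C.isCau_const q⟩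
  map_one' := rfl
  map_mul' := fun _ _ => rfl

include he in
lemma exists_bad : ∃ x : ℕ → Q, C.IsCau x ∧
    ∀ q : Q, ∃ k, ¬ ∀ᶠ n in Filter.atTop, q⁻¹ * x n ∈ C.U k := by
  classical
  have step : ∀ (a : Q) (m i : ℕ), ∃ (a' : Q) (m' : ℕ),
      (∃ u ∈ C.U (m + 2), a' = a * u) ∧ m + 2 ≤ m' ∧ i ≤ m' ∧
      (∀ w ∈ C.U m', a' * w * a'⁻¹ ∈ C.U i) ∧ a'⁻¹ * e i ∉ C.U m' := by
    intro a m i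
    obtain ⟨u, hu, hune⟩ : ∃ u ∈ C.U (m + 2), a * u ≠ e i := by
      obtain ⟨u, hu⟩ := ((C.infinite (m + 2)).diff (Set.finite_singleton (a⁻¹ * e i))).nonempty
      refine ⟨u, hu.1, fun h => ?_⟩
      apply hu.2
      rw [Set.mem_singleton_iff]
      rw [← h]
      group
    have hne1 : (a * u)⁻¹ * e i ≠ 1 := by
      intro h
      exact hune (inv_mul_eq_one.1 h)
    obtain ⟨l₁, hl₁⟩ := C.sep _ hne1
    obtain ⟨l₂, hl₂⟩ := C.conj he (a * u) i
    refine ⟨a * u, max (max (m + 2) i) (max l₁ l₂), ⟨u, hu, rfl⟩, ?_, ?_, ?_, ?_⟩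
    · exact le_trans (le_max_left _ _) (le_max_left _ _)
    · exact le_trans (le_max_right _ _) (le_max_left _ _)
    · intro w hw
      exact hl₂ w (C.anti' (le_trans (le_max_right _ _) (le_max_right _ _)) hw)
    · intro hmem
      exact hl₁ (C.anti' (le_trans (le_max_left _ _) (le_max_right _ _)) hmem)
  choose! stepA stepM h1 h2 h3 h4 h5 using step
  let P : ℕ → Q × ℕ := fun n =>
    Nat.rec ((1 : Q), 0) (fun i ih => (stepA ih.1 ih.2 i, stepM ih.1 ih.2 i)) n
  let a : ℕ → Q := fun n => (P n).1
  let m : ℕ → ℕ := fun n => (P n).2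
  have F1 : ∀ i, ∃ u ∈ C.U (m i + 2), a (i + 1) = a i * u := fun i => h1 (a i) (m i) i
  have F2 : ∀ i, m i + 2 ≤ m (i + 1) := fun i => h2 (a i) (m i) i
  have F3 : ∀ i, i ≤ m (i + 1) := fun i => h3 (a i) (m i) i
  have F4 : ∀ i, ∀ w ∈ C.U (m (i + 1)), a (i + 1) * w * (a (i + 1))⁻¹ ∈ C.U i :=
    fun i => h4 (a i) (m i) i
  have F5 : ∀ i, (a (i + 1))⁻¹ * e i ∉ C.U (m (i + 1)) := fun i => h5 (a i) (m i) i
  have key : ∀ i n, i ≤ n → ∀ w ∈ C.U (m n + 1), (a i)⁻¹ * (a n * w) ∈ C.U (m i + 1) := by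
    intro i n hin
    induction hin with
    | refl =>
      intro w hw
      simpa [inv_mul_cancel_left] using hw
    | @step n' hmn ih =>
      intro w hw
      obtain ⟨u, hu, hau⟩ := F1 n'
      have hw' : w ∈ C.U (m n' + 2) :=
        C.anti' (le_trans (F2 n') (Nat.le_succ _)) hw
      have huw : u * w ∈ C.U (m n' + 1) := C.mul2 hu hw'
      have hih := ih (u * w) huw
      rw [hau, mul_assoc (a n') u w]
      exact hih
  have m_ge : ∀ p, 1 ≤ p → p ≤ m p + 1 := by
    intro p hp
    cases p with
    | zero => omega
    | succ j => have := F3 j; omega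
  have hcau : C.IsCau a := by
    intro k
    have left : ∀ p q, k + 1 ≤ p → p ≤ q → (a p)⁻¹ * a q ∈ C.U k := by
      intro p q hp hpq
      have h := key p q hpq 1 (C.one_mem _)
      rw [mul_one] at h
      exact C.anti' (by have := m_ge p (by omega); omega) h
    have right : ∀ p q, k + 1 ≤ p → p ≤ q → a q * (a p)⁻¹ ∈ C.U k := by
      intro p q hp hpq
      obtain ⟨j, rfl⟩ : ∃ j, p = j + 1 := ⟨p - 1, by omega⟩
      have hs : (a (j + 1))⁻¹ * a q ∈ C.U (m (j + 1)) := by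
        have h := key (j + 1) q hpq 1 (C.one_mem _)
        rw [mul_one] at h
        exact C.anti _ h
      have h4 := F4 j _ hs
      have hexp : a (j + 1) * ((a (j + 1))⁻¹ * a q) * (a (j + 1))⁻¹ = a q * (a (j + 1))⁻¹ := by
        group
      rw [hexp] at h4
      exact C.anti' (by omega) h4
    refine ⟨k + 1, fun p hp q hq => ?_⟩
    rcases le_total p q with h | h
    · exact ⟨left p q hp h, right p q hp h⟩
    · constructor
      · have h1' := C.symm _ _ (left q p hq h)
        simpa [mul_inv_rev, inv_inv] using h1'
      · have h1' := C.symm _ _ (right q p hq h)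
        simpa [mul_inv_rev, inv_inv] using h1'
  refine ⟨a, hcau, ?_⟩
  intro q
  obtain ⟨i, rfl⟩ := he q
  refine ⟨m (i + 1) + 2, fun hev => ?_⟩
  obtain ⟨n, hn1, hn2⟩ := (hev.and (Filter.eventually_ge_atTop (i + 1))).exists
  have hfirst : (a (i + 1))⁻¹ * a n ∈ C.U (m (i + 1) + 1) := by
    have h := key (i + 1) n hn2 1 (C.one_mem _)
    rwa [mul_one] at h
  have hsecond : (a n)⁻¹ * e i ∈ C.U (m (i + 1) + 1) := by
    have h2 := C.symm _ _ hn1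
    have hexp : ((e i)⁻¹ * a n)⁻¹ = (a n)⁻¹ * e i := by
      group
    rw [hexp] at h2
    exact C.anti _ h2
  have hmem : (a (i + 1))⁻¹ * e i ∈ C.U (m (i + 1)) := by
    have hexp : (a (i + 1))⁻¹ * e i = ((a (i + 1))⁻¹ * a n) * ((a n)⁻¹ * e i) := by
      group
    rw [hexp]
    exact C.mul2 hfirst hsecond
  exact F5 i hmem

end GoodScale

lemma isClosed_of_discrete_fibers {G K : Type*} [TopologicalSpace G] [DiscreteTopology G]
    [TopologicalSpace K] (s : Set (G × K)) (h : ∀ g, IsClosed {k | (g, k) ∈ s}) :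
    IsClosed s := by
  rw [← isOpen_compl_iff]
  have hs : sᶜ = ⋃ g : G, ({g} : Set G) ×ˢ ({k | (g, k) ∈ s}ᶜ) := by
    ext ⟨g, k⟩
    constructor
    · intro hns
      exact Set.mem_iUnion.2 ⟨g, Set.mem_singleton g, hns⟩
    · intro h'
      obtain ⟨g', hg'⟩ := Set.mem_iUnion.1 h'
      obtain ⟨hg1, hg2⟩ := hg'
      rw [Set.mem_singleton_iff] at hg1
      subst hg1
      exact hg2
  rw [hs]
  exact isOpen_iUnion fun g => (isOpen_discrete _).prod (h g).isOpen_compl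

set_option synthInstance.maxHeartbeats 1000000 in
set_option maxHeartbeats 2000000 in
theorem ccompact_to_hnt {G : Type u} [Group G] [Countable G] [TopologicalSpace G]
    [DiscreteTopology G] (cc : CCompact G) : HereditarilyNonTopologizable G := by
  intro Hsub Nsub hNormal
  intro t tg t2
  by_contra hne
  haveI hc1 : Countable ↥Hsub := Subtype.countable
  haveI hc2 : Countable (↥Hsub ⧸ Nsub) := Quotient.countable
  obtain ⟨e, he⟩ := exists_surjective_nat (↥Hsub ⧸ Nsub)
  obtain ⟨C⟩ := @exists_goodScale (↥Hsub ⧸ Nsub) _ t tg t2 hne e he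
  letI τ := (C.gfb he).topology
  haveI htg : @IsTopologicalGroup ↥(C.cauSub he) τ _ := (C.gfb he).isTopologicalGroup
  haveI hZn : (C.znull he).Normal := C.znull_normal he
  have hZclosed : IsClosed ((C.znull he : Subgroup _) : Set ↥(C.cauSub he)) := by
    rw [← isOpen_compl_iff, isOpen_iff_mem_nhds]
    intro x hx
    rw [Set.mem_compl_iff, SetLike.mem_coe] at hx
    have hk : ∃ k, ¬ ∀ᶠ n in Filter.atTop, (x : ℕ → ↥Hsub ⧸ Nsub) n ∈ C.U k := by
      by_contra hall
      push_neg at hall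
      exact hx hall
    obtain ⟨k, hk⟩ := hk
    rw [((C.gfb he).nhds_hasBasis x).mem_iff]
    refine ⟨C.Vset he (k + 1), ⟨k + 1, rfl⟩, ?_⟩
    rintro _ ⟨v, hv, rfl⟩
    rw [Set.mem_compl_iff, SetLike.mem_coe]
    intro hz
    apply hk
    refine ((hz (k + 1)).and hv).mono fun n hn => ?_
    have hxn : (x : ℕ → ↥Hsub ⧸ Nsub) n
        = ((x * v : ↥(C.cauSub he)) : ℕ → ↥Hsub ⧸ Nsub) n * (((v : ℕ → ↥Hsub ⧸ Nsub) n))⁻¹ := by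
      show (x : ℕ → ↥Hsub ⧸ Nsub) n
        = (x : ℕ → ↥Hsub ⧸ Nsub) n * (v : ℕ → ↥Hsub ⧸ Nsub) n * ((v : ℕ → ↥Hsub ⧸ Nsub) n)⁻¹
      group
    rw [hxn]
    exact C.mul2 hn.1 (C.symm _ _ hn.2)
  haveI hZclosedI : IsClosed ((C.znull he : Subgroup _) : Set ↥(C.cauSub he)) := hZclosed
  haveI hKtg : IsTopologicalGroup (↥(C.cauSub he) ⧸ C.znull he) :=
    QuotientGroup.instIsTopologicalGroup _
  haveI hKt3 : T3Space (↥(C.cauSub he) ⧸ C.znull he) := QuotientGroup.instT3Space _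
  haveI hKt1 : T1Space (↥(C.cauSub he) ⧸ C.znull he) := inferInstance
  haveI hKt2 : T2Space (↥(C.cauSub he) ⧸ C.znull he) := inferInstance
  set φ : (↥Hsub ⧸ Nsub) →* (↥(C.cauSub he) ⧸ C.znull he) :=
    (QuotientGroup.mk' (C.znull he)).comp (C.constHom he) with hφ
  set ψ : ↥Hsub →* (↥(C.cauSub he) ⧸ C.znull he) := φ.comp (QuotientGroup.mk' Nsub) with hψ
  set Sg : Subgroup (G × (↥(C.cauSub he) ⧸ C.znull he)) := ((Hsub.subtype).prod ψ).range with hSg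
  have hSgclosed : IsClosed (Sg : Set (G × (↥(C.cauSub he) ⧸ C.znull he))) := by
    apply isClosed_of_discrete_fibers
    intro g
    by_cases hg : g ∈ Hsub
    · have hfib : {k | (g, k) ∈ (Sg : Set (G × (↥(C.cauSub he) ⧸ C.znull he)))} = {ψ ⟨g, hg⟩} := by
        ext k
        simp only [Set.mem_setOf_eq, Set.mem_singleton_iff]
        constructor
        · rintro ⟨h, hh⟩
          have h1 : (h : G) = g := congrArg Prod.fst hh
          have h2 : ψ h = k := congrArg Prod.snd hh
          rw [← h2]
          congr 1
          exact Subtype.ext h1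
        · rintro rfl
          exact ⟨⟨g, hg⟩, rfl⟩
      rw [hfib]
      exact isClosed_singleton
    · have hfib : {k | (g, k) ∈ (Sg : Set (G × (↥(C.cauSub he) ⧸ C.znull he)))} = ∅ := by
        ext k
        simp only [Set.mem_setOf_eq, Set.mem_empty_iff_false, iff_false]
        rintro ⟨h, hh⟩
        have h1 : (h : G) = g := congrArg Prod.fst hh
        exact hg (h1 ▸ h.2)
      rw [hfib]
      exact isClosed_empty
  have himg : Prod.snd '' (Sg : Set (G × (↥(C.cauSub he) ⧸ C.znull he))) = Set.range ⇑φ := by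
    ext k
    constructor
    · rintro ⟨⟨g, k'⟩, hgk, rfl⟩
      obtain ⟨h, hh⟩ := hgk
      have h2 : ψ h = k' := congrArg Prod.snd hh
      exact ⟨QuotientGroup.mk' Nsub h, h2⟩
    · rintro ⟨q, rfl⟩
      obtain ⟨h, rfl⟩ := QuotientGroup.mk'_surjective Nsub q
      exact ⟨((h : G), ψ h), ⟨h, rfl⟩, rfl⟩
  have hclosed := cc (↥(C.cauSub he) ⧸ C.znull he) Sg hSgclosed
  rw [himg] at hclosed
  have hdense : ∀ d : ↥(C.cauSub he) ⧸ C.znull he, d ∈ closure (Set.range ⇑φ) := by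
    intro d
    obtain ⟨x, rfl⟩ := QuotientGroup.mk_surjective d
    rw [mem_closure_iff]
    intro O hO hxO
    have hpre : IsOpen ((QuotientGroup.mk : ↥(C.cauSub he) → ↥(C.cauSub he) ⧸ C.znull he) ⁻¹' O) :=
      hO.preimage QuotientGroup.continuous_mk
    have hnb := hpre.mem_nhds hxO
    rw [((C.gfb he).nhds_hasBasis x).mem_iff] at hnb
    obtain ⟨V, ⟨k, rfl⟩, hV⟩ := hnb
    obtain ⟨N, hN⟩ := x.2 k
    have hv : (x⁻¹ * C.constHom he ((x : ℕ → ↥Hsub ⧸ Nsub) N) : ↥(C.cauSub he))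
        ∈ C.Vset he k := by
      refine (Filter.eventually_ge_atTop N).mono fun n hn => ?_
      exact (hN n hn N le_rfl).1
    have hconst : C.constHom he ((x : ℕ → ↥Hsub ⧸ Nsub) N)
        = x * (x⁻¹ * C.constHom he ((x : ℕ → ↥Hsub ⧸ Nsub) N)) := by
      group
    have hmemO : C.constHom he ((x : ℕ → ↥Hsub ⧸ Nsub) N)
        ∈ (QuotientGroup.mk : ↥(C.cauSub he) → ↥(C.cauSub he) ⧸ C.znull he) ⁻¹' O := by
      apply hV
      exact ⟨_, hv, hconst.symm⟩
    exact ⟨φ ((x : ℕ → ↥Hsub ⧸ Nsub) N), hmemO, ⟨_, rfl⟩⟩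
  obtain ⟨xb, hxbcau, hxbbad⟩ := C.exists_bad he
  have hxbnot : (QuotientGroup.mk (⟨xb, hxbcau⟩ : ↥(C.cauSub he)) :
      ↥(C.cauSub he) ⧸ C.znull he) ∉ Set.range ⇑φ := by
    rintro ⟨q, hq⟩
    have hmemz : ((C.constHom he q)⁻¹ * ⟨xb, hxbcau⟩ : ↥(C.cauSub he)) ∈ C.znull he := by
      rw [← QuotientGroup.eq]
      exact hq
    obtain ⟨k, hk⟩ := hxbbad q
    exact hk (hmemz k)
  have huniv : Set.range ⇑φ = Set.univ := by
    ext d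
    simp only [Set.mem_univ, iff_true]
    rw [← hclosed.closure_eq]
    exact hdense d
  exact hxbnot (huniv ▸ Set.mem_univ _)

/-- Transfer: if `X` is non-topologizable and `X ≃* Y` with `Y` a Hausdorff topological
group, then `Y` is discrete. -/
lemma discreteTopology_of_nonTopologizable {X Y : Type*} [Group X] [Group Y]
    [tY : TopologicalSpace Y] [IsTopologicalGroup Y] [T2Space Y]
    (hX : NonTopologizable X) (e : X ≃* Y) : DiscreteTopology Y := by
  letI tX : TopologicalSpace X := tY.induced e.toMonoidHom
  haveI htg : @IsTopologicalGroup X tX _ := topologicalGroup_induced (G := Y) e.toMonoidHom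
  have hemb : @Topology.IsEmbedding X Y tX tY e := by
    refine ⟨⟨rfl⟩, e.injective⟩
  haveI ht2 : @T2Space X tX := @Topology.IsEmbedding.t2Space X Y tX tY _ _ hemb
  have hbot : tX = ⊥ := hX tX htg ht2
  rw [discreteTopology_iff_isOpen_singleton]
  intro y
  have hx : IsOpen[tX] ({e.symm y} : Set X) := by
    rw [hbot]
    exact @isOpen_discrete X ⊥ (discreteTopology_bot X) _
  rw [isOpen_induced_iff] at hx
  obtain ⟨U, hU, hUx⟩ := hx
  have : U = {y} := by
    have h1 : (⇑e.toMonoidHom) '' ((⇑e.toMonoidHom) ⁻¹' U) = U :=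
      Set.image_preimage_eq U e.surjective
    rw [hUx] at h1
    rw [← h1, Set.image_singleton]
    simp
  rwa [this] at hU

/-- A discrete subgroup of a Hausdorff topological group is closed. -/
lemma isClosed_of_discrete_subgroup {K : Type*} [Group K] [TopologicalSpace K]
    [IsTopologicalGroup K] [T2Space K] (P : Subgroup K) [DiscreteTopology ↥P] :
    IsClosed (P : Set K) := by
  obtain ⟨V, hV, hV1⟩ : ∃ V ∈ 𝓝 (1 : K), V ∩ (P : Set K) = {1} :=
    nhds_inter_eq_singleton_of_mem_discrete (isDiscrete_iff_discreteTopology.mpr ‹_›) P.one_mem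
  obtain ⟨W, hW, hWV⟩ := exists_nhds_split_inv hV
  refine isClosed_of_closure_subset ?_
  intro x hx
  have hL : (fun w => w * x) '' W ∈ 𝓝 x := by
    have h2 := (Homeomorph.mulRight x).map_nhds_eq (1 : K)
    have h3 : (Homeomorph.mulRight x) (1 : K) = x := by simp
    rw [h3] at h2
    rw [← h2]
    exact Filter.image_mem_map hW
  obtain ⟨p, hpP, hpL⟩ : ∃ p, p ∈ (P : Set K) ∧ p ∈ (fun w => w * x) '' W := by
    have := (mem_closure_iff_nhds.1 hx) _ hL
    obtain ⟨p, hp1, hp2⟩ := this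
    exact ⟨p, hp2, hp1⟩
  -- any member of P in L equals p
  have key : ∀ q, q ∈ (P : Set K) → q ∈ (fun w => w * x) '' W → q = p := by
    rintro q hqP ⟨w2, hw2, rfl⟩
    obtain ⟨w1, hw1, rfl⟩ := hpL
    have hdiv : (w2 * x) * (w1 * x)⁻¹ ∈ V := by
      have : (w2 * x) * (w1 * x)⁻¹ = w2 / w1 := by
        simp [mul_inv_rev, div_eq_mul_inv, mul_assoc]
      rw [this]
      exact hWV w2 hw2 w1 hw1
    have hmem : (w2 * x) * (w1 * x)⁻¹ ∈ V ∩ (P : Set K) :=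
      ⟨hdiv, mul_mem hqP (inv_mem hpP)⟩
    rw [hV1] at hmem
    have h1 : (w2 * x) * (w1 * x)⁻¹ = 1 := hmem
    exact mul_inv_eq_one.1 h1
  -- x is in the closure of {p}
  have hxp : x ∈ closure ({p} : Set K) := by
    rw [mem_closure_iff_nhds]
    intro U hU
    obtain ⟨q, hq1, hq2⟩ := (mem_closure_iff_nhds.1 hx) _ (Filter.inter_mem hU hL)
    exact ⟨q, hq1.1, by rw [Set.mem_singleton_iff]; exact key q hq2 hq1.2⟩
  rw [closure_singleton] at hxp
  rw [mem_singleton_iff] at hxp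
  rw [hxp]
  exact hpP

theorem hnt_to_ccompact {G : Type u} [Group G] [TopologicalSpace G] [DiscreteTopology G]
    (hnt : HereditarilyNonTopologizable G) : CCompact G := by
  intro H _ _ _ _ S hS
  classical
  set A : Subgroup G := S.map (MonoidHom.fst G H) with hA
  set B : Subgroup H := S.map (MonoidHom.snd G H) with hB
  set N : Subgroup H := S.comap (MonoidHom.inr G H) with hN
  have hNmem : ∀ h : H, h ∈ N ↔ ((1 : G), h) ∈ S := fun h => Iff.rfl
  have hNclosed : IsClosed (N : Set H) := by
    have hc : Continuous (fun h : H => ((1 : G), h)) := continuous_const.prodMk continuous_id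
    have : (N : Set H) = (fun h : H => ((1 : G), h)) ⁻¹' (S : Set (G × H)) := rfl
    rw [this]
    exact hS.preimage hc
  have hNB : N ≤ B := fun h hh => ⟨(1, h), hh, rfl⟩
  -- swap lemma
  have hswap : ∀ g h, ((g, h) ∈ S) → (((1 : G), h) ∈ S ↔ (g, (1 : H)) ∈ S) := by
    intro g h hgh
    constructor
    · intro h1
      have : (g, (1 : H)) = (g, h) * ((1:G), h)⁻¹ := by
        simp
      rw [this]
      exact mul_mem hgh (inv_mem h1)
    · intro h1
      have : ((1 : G), h) = (g, (1:H))⁻¹ * (g, h) := by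
        simp
      rw [this]
      exact mul_mem (inv_mem h1) hgh
  set Bbar : Subgroup H := B.topologicalClosure with hBbar
  have hBle : B ≤ Bbar := B.le_topologicalClosure
  set N' : Subgroup ↥Bbar := N.subgroupOf Bbar with hN'
  have hN'mem : ∀ c : ↥Bbar, c ∈ N' ↔ (c : H) ∈ N := fun c => Iff.rfl
  have hN'closed : IsClosed (N' : Set ↥Bbar) := by
    have : (N' : Set ↥Bbar) = (Subtype.val) ⁻¹' (N : Set H) := rfl
    rw [this]
    exact hNclosed.preimage continuous_subtype_val
  -- B normalizes N, hence Bbar does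
  have hBnorm : ∀ b : H, b ∈ B → ∀ n : H, n ∈ N → b * n * b⁻¹ ∈ N := by
    intro b hb n hn
    obtain ⟨⟨g, b'⟩, hgb, rfl⟩ := hb
    rw [hNmem]
    have heq : ((1 : G), (MonoidHom.snd G H) (g, b') * n * ((MonoidHom.snd G H) (g, b'))⁻¹)
        = (g, b') * ((1:G), n) * (g, b')⁻¹ := by
      simp
    rw [heq]
    exact mul_mem (mul_mem hgb ((hNmem n).1 hn)) (inv_mem hgb)
  haveI hN'normal : N'.Normal := by
    constructor
    intro n hn c
    rw [hN'mem]
    have hcT : ∀ m : H, m ∈ N → IsClosed ((fun h : H => h * m * h⁻¹) ⁻¹' (N : Set H)) := by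
      intro m _
      exact hNclosed.preimage (((continuous_id.mul continuous_const)).mul continuous_inv)
    -- the set of elements normalizing n
    have hsub : (B : Set H) ⊆ (fun h : H => h * (n : H) * h⁻¹) ⁻¹' (N : Set H) := by
      intro b hb
      exact hBnorm b hb (n : H) ((hN'mem n).1 hn)
    have hclos : closure (B : Set H) ⊆ (fun h : H => h * (n : H) * h⁻¹) ⁻¹' (N : Set H) :=
      closure_minimal hsub (hcT (n : H) ((hN'mem n).1 hn))
    have hcBbar : (c : H) ∈ closure (B : Set H) := c.2
    exact hclos hcBbar
  -- M : the corresponding subgroup of A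
  set M : Subgroup ↥A := (S.comap (MonoidHom.inl G H)).subgroupOf A with hM
  have hMmem : ∀ a : ↥A, a ∈ M ↔ ((a : G), (1 : H)) ∈ S := fun a => Iff.rfl
  haveI hMnormal : M.Normal := by
    constructor
    intro m hm a
    rw [hMmem]
    have hmm := (hMmem m).1 hm
    obtain ⟨ga, hga⟩ := a
    obtain ⟨⟨g', b'⟩, hgb, hfst⟩ := hga
    have hg : g' = ga := hfst
    subst hg
    show ((g' * (m : G) * g'⁻¹ : G), (1:H)) ∈ S
    have heq : ((g' * (m : G) * g'⁻¹ : G), (1:H)) = (g', b') * (((m : G)), (1:H)) * (g', b')⁻¹ := by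
      simp
    rw [heq]
    exact mul_mem (mul_mem hgb hmm) (inv_mem hgb)
  -- the homomorphisms
  set fB : ↥S →* ↥B := (MonoidHom.snd G H).subgroupMap S with hfB
  set ι : ↥B →* ↥Bbar := Subgroup.inclusion hBle with hι
  set f : ↥S →* ↥Bbar ⧸ N' := (QuotientGroup.mk' N').comp (ι.comp fB) with hf
  set fA : ↥A →* ↥A := MonoidHom.id _ with hfA'
  set f' : ↥S →* ↥A ⧸ M := (QuotientGroup.mk' M).comp ((MonoidHom.fst G H).subgroupMap S) with hf'
  have hf'surj : Surjective f' :=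
    (QuotientGroup.mk'_surjective M).comp ((MonoidHom.fst G H).subgroupMap_surjective S)
  have hker : f'.ker = f.ker := by
    ext s
    obtain ⟨⟨g, h⟩, hs⟩ := s
    simp only [MonoidHom.mem_ker, hf, hf', MonoidHom.comp_apply]
    rw [QuotientGroup.mk'_apply, QuotientGroup.eq_one_iff,
      QuotientGroup.mk'_apply, QuotientGroup.eq_one_iff]
    have e1 : ((MonoidHom.fst G H).subgroupMap S ⟨(g, h), hs⟩ : G) = g := rfl
    have e2 : ((ι ((MonoidHom.snd G H).subgroupMap S ⟨(g, h), hs⟩) : ↥Bbar) : H) = h := rfl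
    rw [hMmem, hN'mem, hNmem, e1, e2]
    exact (hswap g h hs).symm
  -- the isomorphism
  have iso : ↥A ⧸ M ≃* f.range :=
    ((QuotientGroup.quotientKerEquivOfSurjective f' hf'surj).symm.trans
      (QuotientGroup.quotientMulEquivOfEq hker)).trans (QuotientGroup.quotientKerEquivRange f)
  haveI : IsClosed (N' : Set ↥Bbar) := hN'closed
  haveI : DiscreteTopology ↥f.range :=
    discreteTopology_of_nonTopologizable (hnt A M) iso
  have hrange_closed : IsClosed (f.range : Set (↥Bbar ⧸ N')) :=
    isClosed_of_discrete_subgroup f.range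
  -- pull back along the quotient map
  have hpre : IsClosed ((QuotientGroup.mk : ↥Bbar → ↥Bbar ⧸ N') ⁻¹' (f.range : Set (↥Bbar ⧸ N'))) :=
    hrange_closed.preimage QuotientGroup.continuous_mk
  have hset : (QuotientGroup.mk : ↥Bbar → ↥Bbar ⧸ N') ⁻¹' (f.range : Set (↥Bbar ⧸ N'))
      = ((B.subgroupOf Bbar : Subgroup ↥Bbar) : Set ↥Bbar) := by
    ext c
    simp only [Set.mem_preimage, SetLike.mem_coe, MonoidHom.mem_range]
    constructor
    · rintro ⟨s, hfs⟩
      have : (QuotientGroup.mk (ι (fB s)) : ↥Bbar ⧸ N') = QuotientGroup.mk c := hfs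
      rw [QuotientGroup.eq] at this
      have hval : ((ι (fB s))⁻¹ * c : ↥Bbar) ∈ N' := this
      rw [hN'mem] at hval
      have : (c : H) = ((ι (fB s) : ↥Bbar) : H) * (((ι (fB s))⁻¹ * c : ↥Bbar) : H) := by
        push_cast
        group
      rw [Subgroup.mem_subgroupOf]
      show (c : H) ∈ B
      rw [this]
      refine mul_mem ?_ (hNB hval)
      exact (fB s).2
    · intro hc
      rw [Subgroup.mem_subgroupOf] at hc
      obtain ⟨p, hp, hps⟩ := hc
      refine ⟨⟨p, hp⟩, ?_⟩
      have hvaleq : ι (fB ⟨p, hp⟩) = c := by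
        apply Subtype.ext
        exact hps
      show QuotientGroup.mk (ι (fB ⟨p, hp⟩)) = QuotientGroup.mk c
      rw [hvaleq]
  rw [hset] at hpre
  -- transport down to H
  have hBbarclosed : IsClosed (Bbar : Set H) := B.isClosed_topologicalClosure
  have hval : Subtype.val '' ((B.subgroupOf Bbar : Subgroup ↥Bbar) : Set ↥Bbar) = (B : Set H) := by
    ext h
    constructor
    · rintro ⟨c, hc, rfl⟩
      exact (Subgroup.mem_subgroupOf).1 hc
    · intro hh
      exact ⟨⟨h, hBle hh⟩, (Subgroup.mem_subgroupOf).2 hh, rfl⟩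
  have hBclosed : IsClosed (B : Set H) := by
    rw [← hval]
    exact (hBbarclosed.isClosedEmbedding_subtypeVal).isClosedMap _ hpre
  have hfinal : Prod.snd '' (S : Set (G × H)) = (B : Set H) := by
    rw [hB]
    rw [Subgroup.coe_map]
    rfl
  rw [hfinal]
  exact hBclosed

theorem countable_discrete_cCompact_iff_hereditarilyNonTopologizable
    {G : Type u} [Group G] [Countable G] [TopologicalSpace G] [DiscreteTopology G] :
    CCompact G ↔ HereditarilyNonTopologizable G :=
  ⟨ccompact_to_hnt, hnt_to_ccompact⟩
end

section
/- A countable group G is non-topologizable if and only if the identity e is algebraically isolated in G. -/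
structure Monomial (G : Type*) [Group G] where
  head : G
  tail : List (ℤ × G)

def Monomial.eval {G : Type*} [Group G] (f : Monomial G) (g : G) : G :=
  f.head * (f.tail.map fun p => g ^ p.1 * p.2).prod

def AlgebraicallyIsolated (G : Type*) [Group G] : Prop :=
  ∃ fs : List (Monomial G), {g : G | g ≠ 1} = {g : G | ∃ f ∈ fs, f.eval g = 1}

set_option linter.unusedSectionVars false
set_option linter.unnecessarySimpa false

namespace NTP

open Function List

variable {G : Type*} [Group G]

variable {G : Type*} [Group G]

def sg (b : Bool) : ℤ := if b then 1 else -1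

abbrev Entry (G : Type*) := G × ℕ × Bool

def entryVal (x : ℕ → G) (p : Entry G) : G := p.1 * (x p.2.1) ^ sg p.2.2 * p.1⁻¹

def prodL (x : ℕ → G) (L : List (Entry G)) : G := (L.map (entryVal x)).prod

@[simp] lemma prodL_nil (x : ℕ → G) : prodL x [] = 1 := rfl

lemma prodL_append (x : ℕ → G) (L₁ L₂ : List (Entry G)) :
    prodL x (L₁ ++ L₂) = prodL x L₁ * prodL x L₂ := by
  simp [prodL]

lemma prodL_cons (x : ℕ → G) (p : Entry G) (L : List (Entry G)) :
    prodL x (p :: L) = entryVal x p * prodL x L := by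
  simp [prodL]

lemma prodL_congr {x y : ℕ → G} {L : List (Entry G)}
    (h : ∀ p ∈ L, x p.2.1 = y p.2.1) : prodL x L = prodL y L := by
  induction L with
  | nil => rfl
  | cons p L ih =>
    rw [prodL_cons, prodL_cons, ih fun q hq => h q (mem_cons_of_mem _ hq)]
    have := h p (mem_cons_self)
    simp [entryVal, this]

variable (e : ℕ → G)

def InCset (n i : ℕ) (c : G) : Prop :=
  ∃ l : List G, l.length + n ≤ i ∧ (∀ y ∈ l, ∃ k ≤ i, y = e k) ∧ c = l.prod

def Good (n : ℕ) (L : List (Entry G)) : Prop :=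
  (∀ p ∈ L, n ≤ p.2.1 ∧ InCset e n p.2.1 p.1) ∧
  ∀ N, (L.filter fun p => p.2.1 ≤ N).length * 2 ^ n ≤ 2 ^ (N + 1)

lemma good_nil (n : ℕ) : Good e n ([] : List (Entry G)) :=
  ⟨by simp, fun N => by simp⟩

lemma InCset.mono {n n' i : ℕ} {c : G} (h : InCset e n' i c) (hn : n ≤ n') : InCset e n i c := by
  obtain ⟨l, h1, h2, h3⟩ := h
  exact ⟨l, le_trans (by omega) h1, h2, h3⟩

lemma good_le {n n' : ℕ} {L : List (Entry G)} (hn : n ≤ n') (h : Good e n' L) : Good e n L := by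
  obtain ⟨h1, h2⟩ := h
  refine ⟨fun p hp => ⟨le_trans hn (h1 p hp).1, (h1 p hp).2.mono e hn⟩, fun N => ?_⟩
  calc (L.filter fun p => p.2.1 ≤ N).length * 2 ^ n
      ≤ (L.filter fun p => p.2.1 ≤ N).length * 2 ^ n' :=
        Nat.mul_le_mul_left _ (Nat.pow_le_pow_right (by norm_num) hn)
    _ ≤ 2 ^ (N + 1) := h2 N

lemma good_append {n : ℕ} {L₁ L₂ : List (Entry G)} (h₁ : Good e (n + 1) L₁)
    (h₂ : Good e (n + 1) L₂) : Good e n (L₁ ++ L₂) := by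
  refine ⟨fun p hp => ?_, fun N => ?_⟩
  · rcases mem_append.1 hp with hp | hp
    · exact ⟨le_trans (by omega) (h₁.1 p hp).1, ((h₁.1 p hp).2).mono e (by omega)⟩
    · exact ⟨le_trans (by omega) (h₂.1 p hp).1, ((h₂.1 p hp).2).mono e (by omega)⟩
  · have b1 := h₁.2 N
    have b2 := h₂.2 N
    rw [filter_append, length_append]
    set a := (L₁.filter fun p => p.2.1 ≤ N).length
    set b := (L₂.filter fun p => p.2.1 ≤ N).length
    have key : (a + b) * 2 ^ n * 2 ≤ 2 ^ (N + 1) * 2 := by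
      have h3 : (a + b) * 2 ^ n * 2 = a * 2 ^ (n + 1) + b * 2 ^ (n + 1) := by
        rw [pow_succ]; ring
      have h4 : 2 ^ (N + 1) + 2 ^ (N + 1) = 2 ^ (N + 1) * 2 := by ring
      rw [h3, ← h4]
      exact Nat.add_le_add b1 b2
    exact Nat.le_of_mul_le_mul_right key (by norm_num)

lemma good_single (n : ℕ) (ε : Bool) : Good e n [((1 : G), n, ε)] := by
  constructor
  · rintro p hp
    simp only [mem_singleton] at hp
    subst hp
    exact ⟨le_refl _, [], by simpa using n.le_refl, by simp, by simp⟩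
  · intro N
    by_cases h : n ≤ N
    · have : ([((1:G), n, ε)].filter fun p => p.2.1 ≤ N).length ≤ 1 := by
        apply le_trans (length_filter_le _ _); simp
      calc ([((1:G), n, ε)].filter fun p => p.2.1 ≤ N).length * 2 ^ n ≤ 1 * 2 ^ n :=
            Nat.mul_le_mul_right _ this
        _ ≤ 2 ^ (N + 1) := by rw [one_mul]; exact Nat.pow_le_pow_right (by norm_num) (by omega)
    · have : ([((1:G), n, ε)].filter fun p => p.2.1 ≤ N) = [] := by
        simp [filter, h]
      rw [this]; simp

def flipRev (L : List (Entry G)) : List (Entry G) :=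
  L.reverse.map fun p => (p.1, p.2.1, !p.2.2)

lemma prodL_flipRev (x : ℕ → G) (L : List (Entry G)) : prodL x (flipRev L) = (prodL x L)⁻¹ := by
  induction L with
  | nil => simp [prodL, flipRev]
  | cons p L ih =>
    have : flipRev (p :: L) = flipRev L ++ [(p.1, p.2.1, !p.2.2)] := by
      simp [flipRev]
    rw [this]
    simp only [prodL, map_append, prod_append, map_cons, prod_cons] at *
    rw [ih]
    simp [entryVal, sg, mul_assoc]
    cases p.2.2 <;> simp [mul_assoc]

lemma good_flipRev {n : ℕ} {L : List (Entry G)} (h : Good e n L) : Good e n (flipRev L) := by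
  obtain ⟨h1, h2⟩ := h
  constructor
  · intro p hp
    simp only [flipRev, mem_map, mem_reverse] at hp
    obtain ⟨q, hq, rfl⟩ := hp
    exact h1 q hq
  · intro N
    have : ((flipRev L).filter fun p => p.2.1 ≤ N).length
        = (L.filter fun p => p.2.1 ≤ N).length := by
      rw [flipRev, filter_map, length_map, filter_reverse, length_reverse]
      rfl
    rw [this]; exact h2 N

lemma good_sublist {n : ℕ} {L L' : List (Entry G)} (hs : L' <+ L) (h : Good e n L) :
    Good e n L' := by
  refine ⟨fun p hp => h.1 p (hs.mem hp), fun N => ?_⟩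
  exact le_trans (Nat.mul_le_mul_right _ (hs.filter _).length_le) (h.2 N)

def conjE (c : G) (p : Entry G) : Entry G := (c * p.1, p.2)

@[simp] lemma conjE_fst (c : G) (p : Entry G) : (conjE c p).1 = c * p.1 := rfl
@[simp] lemma conjE_snd (c : G) (p : Entry G) : (conjE c p).2 = p.2 := rfl

lemma prodL_conjE (x : ℕ → G) (c : G) (L : List (Entry G)) :
    prodL x (L.map (conjE c)) = c * prodL x L * c⁻¹ := by
  induction L with
  | nil => simp [prodL]
  | cons p L ih =>
    simp only [prodL, map_cons, prod_cons] at *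
    rw [ih, entryVal, conjE]
    simp [entryVal, mul_assoc]

lemma good_conjE {n k M : ℕ} {L : List (Entry G)} (hk : k ≤ M) (hn : n ≤ M)
    (h : Good e (M + 1) L) : Good e n (L.map (conjE (e k))) := by
  obtain ⟨h1, h2⟩ := h
  constructor
  · intro p hp
    simp only [mem_map] at hp
    obtain ⟨q, hq, rfl⟩ := hp
    obtain ⟨hq1, l, hl1, hl2, hl3⟩ := h1 q hq
    refine ⟨by simp only [conjE_snd]; omega, e k :: l, by simp only [conjE_snd, length_cons]; omega, ?_, by simp [hl3]⟩
    intro y hy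
    simp only [conjE_snd]
    rcases mem_cons.1 hy with rfl | hy
    · exact ⟨k, by omega, rfl⟩
    · obtain ⟨k', hk', rfl⟩ := hl2 y hy
      exact ⟨k', hk', rfl⟩
  · intro N
    have hlen : ((L.map (conjE (e k))).filter fun p => p.2.1 ≤ N).length
        = (L.filter fun p => p.2.1 ≤ N).length := by
      rw [filter_map, length_map]; rfl
    rw [hlen]
    calc (L.filter fun p => p.2.1 ≤ N).length * 2 ^ n
        ≤ (L.filter fun p => p.2.1 ≤ N).length * 2 ^ (M + 1) :=
          Nat.mul_le_mul_left _ (Nat.pow_le_pow_right (by norm_num) (by omega))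
      _ ≤ 2 ^ (N + 1) := h2 N

def wordsUpTo {α : Type*} : ℕ → List α → List (List α)
  | 0, _ => [[]]
  | n + 1, A => wordsUpTo n A ++ A.flatMap fun a => (wordsUpTo n A).map (a :: ·)

lemma mem_wordsUpTo {α : Type*} {A : List α} : ∀ {n : ℕ} {l : List α},
    l.length ≤ n → (∀ y ∈ l, y ∈ A) → l ∈ wordsUpTo n A := by
  intro n
  induction n with
  | zero => intro l h1 _; simp at h1; simp [wordsUpTo, h1]
  | succ n ih =>
    intro l h1 h2
    cases l with
    | nil => exact mem_append_left _ (ih (by simp) (by simp))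
    | cons a l =>
      refine mem_append_right _ ?_
      simp only [mem_flatMap, mem_map]
      exact ⟨a, h2 a (mem_cons_self), l, ih (by simpa using h1) fun y hy => h2 y (mem_cons_of_mem _ hy), rfl⟩

def allP (e : ℕ → G) (j : ℕ) : List G :=
  (wordsUpTo j ((List.range (j + 1)).map e)).map List.prod

lemma mem_allP {e : ℕ → G} {j : ℕ} {c : G} (l : List G) (h1 : l.length ≤ j)
    (h2 : ∀ y ∈ l, ∃ k ≤ j, y = e k) (h3 : c = l.prod) : c ∈ allP e j := by
  subst h3
  refine mem_map_of_mem (mem_wordsUpTo h1 ?_)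
  intro y hy
  obtain ⟨k, hk, rfl⟩ := h2 y hy
  simp only [mem_map, mem_range]
  exact ⟨k, by omega, rfl⟩

def entsList (e : ℕ → G) (j : ℕ) : List (Entry G) :=
  (allP e j).flatMap fun c => (List.range (j + 1)).flatMap fun i => [(c, i, true), (c, i, false)]

lemma mem_entsList {e : ℕ → G} {j : ℕ} {p : Entry G} (h1 : p.1 ∈ allP e j)
    (h2 : p.2.1 ≤ j) : p ∈ entsList e j := by
  simp only [entsList, mem_flatMap, mem_range]
  refine ⟨p.1, h1, p.2.1, by omega, ?_⟩
  rcases p with ⟨c, i, ε⟩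
  cases ε <;> simp

def Lcands (e : ℕ → G) (j : ℕ) : List (List (Entry G)) :=
  wordsUpTo (2 ^ (j + 1)) (entsList e j)

def evalT (g : G) (l : List (ℤ × G)) : G := (l.map fun p => g ^ p.1 * p.2).prod

lemma eval_def (f : Monomial G) (g : G) : f.eval g = f.head * evalT g f.tail := rfl

lemma evalT_append (g : G) (l₁ l₂ : List (ℤ × G)) :
    evalT g (l₁ ++ l₂) = evalT g l₁ * evalT g l₂ := by simp [evalT]

def toMon (xs : ℕ → G) (j : ℕ) (L : List (Entry G)) (b : G) : Monomial G :=
  ⟨1, (L.flatMap fun p => if p.2.1 = j then [((0 : ℤ), p.1), (sg p.2.2, p.1⁻¹)]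
      else [((0 : ℤ), entryVal xs p)]) ++ [((0 : ℤ), b⁻¹)]⟩

lemma toMon_eval (xs : ℕ → G) (j : ℕ) (L : List (Entry G)) (b g : G) :
    (toMon xs j L b).eval g
      = (L.map fun p => p.1 * (if p.2.1 = j then g else xs p.2.1) ^ sg p.2.2 * p.1⁻¹).prod
        * b⁻¹ := by
  rw [eval_def, toMon, one_mul]
  induction L with
  | nil => simp [evalT]
  | cons p L ih =>
    rw [flatMap_cons, append_assoc, evalT_append, ih, map_cons, prod_cons, ← mul_assoc]
    congr 1
    by_cases h : p.2.1 = j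
    · simp [h, evalT, mul_assoc]
    · simp [h, evalT, entryVal, mul_assoc]

lemma prod_map_filter {α : Type*} (f : α → G) (q : α → Bool) (L : List α)
    (h : ∀ p ∈ L, q p = false → f p = 1) :
    ((L.filter q).map f).prod = (L.map f).prod := by
  induction L with
  | nil => rfl
  | cons p L ih =>
    have ih' := ih fun p hp hq => h p (mem_cons_of_mem _ hp) hq
    by_cases hq : q p
    · rw [filter_cons_of_pos hq]
      simp only [map_cons, prod_cons, ih']
    · rw [filter_cons_of_neg (by simpa using hq)]
      simp only [map_cons, prod_cons, ih', h p (mem_cons_self) (by simpa using hq), one_mul]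


def FS (e : ℕ → G) (l : List G) : List (Monomial G) :=
  (Lcands e l.length).flatMap fun L =>
    (List.range l.length).map fun m => toMon (fun i => l.getD i 1) l.length L (e m)

def xls (pk : List G → G) : ℕ → List G
  | 0 => []
  | j + 1 => xls pk j ++ [pk (xls pk j)]

def xseq (pk : List G → G) (i : ℕ) : G := (xls pk (i + 1)).getD i 1

@[simp] lemma length_xls (pk : List G → G) (j : ℕ) : (xls pk j).length = j := by
  induction j with
  | zero => rfl
  | succ j ih => simp [xls, ih]

lemma xseq_eq_pk (pk : List G → G) (j : ℕ) : xseq pk j = pk (xls pk j) := by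
  have : xls pk (j + 1) = xls pk j ++ [pk (xls pk j)] := rfl
  rw [xseq, this]
  have hl : (xls pk j).length = j := length_xls pk j
  rw [← hl]
  simp

lemma getD_xls (pk : List G → G) {i j : ℕ} (h : i < j) :
    (xls pk j).getD i 1 = xseq pk i := by
  induction j with
  | zero => omega
  | succ j ih =>
    rcases Nat.lt_or_ge i j with hij | hij
    · have : xls pk (j + 1) = xls pk j ++ [pk (xls pk j)] := rfl
      rw [this, getD_append _ _ _ _ (by simpa using hij), ih hij]
    · have : i = j := by omega
      subst this
      rfl

theorem invariant (e : ℕ → G) (pk : List G → G)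
    (hpk : ∀ l : List G, ∀ f ∈ FS e l, f.eval 1 ≠ 1 → f.eval (pk l) ≠ 1) :
    ∀ j m (L : List (Entry G)), Good e (m + 1) L → (∀ p ∈ L, p.2.1 ≤ j) →
      e m ≠ 1 → prodL (xseq pk) L ≠ e m := by
  intro j
  induction j using Nat.strong_induction_on with
  | _ j IH =>
  intro m L hG hb hm hEq
  by_cases hex : ∃ p ∈ L, p.2.1 = j
  · obtain ⟨p0, hp0L, hp0⟩ := hex
    have hmj : m + 1 ≤ j := by
      have := (hG.1 p0 hp0L).1; omega
    set l := xls pk j with hldef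
    have hlen : l.length = j := length_xls pk j
    set xs' : ℕ → G := fun i => l.getD i 1 with hxs'
    set q := toMon xs' j L (e m) with hq
    have hqFS : q ∈ FS e l := by
      simp only [FS, mem_flatMap, mem_map, hlen]
      refine ⟨L, ?_, m, mem_range.2 (by omega), rfl⟩
      apply mem_wordsUpTo
      · have h2 := hG.2 j
        have hfil : L.filter (fun p => p.2.1 ≤ j) = L :=
          filter_eq_self.2 (by intro p hp; simpa using hb p hp)
        rw [hfil] at h2
        calc L.length ≤ L.length * 2 ^ (m + 1) :=
              Nat.le_mul_of_pos_right _ (Nat.pow_pos (by norm_num))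
          _ ≤ 2 ^ (j + 1) := h2
      · intro p hp
        apply mem_entsList
        · obtain ⟨hp1, l', h1, h2', h3⟩ := hG.1 p hp
          exact mem_allP l' (by have := hb p hp; omega)
            (fun y hy => by
              obtain ⟨k, hk, rfl⟩ := h2' y hy
              exact ⟨k, le_trans hk (hb p hp), rfl⟩) h3
        · exact hb p hp
    have heval1 : q.eval 1 ≠ 1 := by
      rw [hq, toMon_eval]
      intro hcon
      set Lf := L.filter (fun p => ¬ (p.2.1 = j)) with hLf
      have hstep1 : ((Lf.map fun p =>
          p.1 * (if p.2.1 = j then (1 : G) else xs' p.2.1) ^ sg p.2.2 * p.1⁻¹)).prod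
          = (L.map fun p =>
          p.1 * (if p.2.1 = j then (1 : G) else xs' p.2.1) ^ sg p.2.2 * p.1⁻¹).prod := by
        apply prod_map_filter
        intro p _ hqp
        simp only [decide_not, Bool.not_eq_false', decide_eq_true_eq] at hqp
        simp [hqp]
      have hstep2 : (Lf.map fun p =>
          p.1 * (if p.2.1 = j then (1 : G) else xs' p.2.1) ^ sg p.2.2 * p.1⁻¹)
          = Lf.map (entryVal (xseq pk)) := by
        apply map_congr_left
        intro p hp
        have hpj : ¬ (p.2.1 = j) := by
          have := of_mem_filter hp
          simpa using this
        have hple : p.2.1 < j := by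
          have := hb p (mem_of_mem_filter hp); omega
        rw [if_neg hpj, entryVal, hxs', hldef]
        simp only []
        rw [getD_xls pk hple]
      have hIH : prodL (xseq pk) Lf ≠ e m :=
        IH (j - 1) (by omega) m Lf (good_sublist e filter_sublist hG)
          (by
            intro p hp
            have h1 := hb p (mem_of_mem_filter hp)
            have h2 : ¬ (p.2.1 = j) := by simpa using of_mem_filter hp
            omega) hm
      apply hIH
      calc prodL (xseq pk) Lf = (Lf.map (entryVal (xseq pk))).prod := rfl
        _ = (Lf.map fun p =>
            p.1 * (if p.2.1 = j then (1 : G) else xs' p.2.1) ^ sg p.2.2 * p.1⁻¹).prod := by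
              rw [hstep2]
        _ = (L.map fun p =>
            p.1 * (if p.2.1 = j then (1 : G) else xs' p.2.1) ^ sg p.2.2 * p.1⁻¹).prod := hstep1
        _ = e m := mul_inv_eq_one.1 hcon
    have heval2 := hpk l q hqFS heval1
    apply heval2
    rw [hq, toMon_eval]
    have hmain : (L.map fun p =>
        p.1 * (if p.2.1 = j then pk l else xs' p.2.1) ^ sg p.2.2 * p.1⁻¹)
        = L.map (entryVal (xseq pk)) := by
      apply map_congr_left
      intro p hp
      by_cases hpj : p.2.1 = j
      · rw [if_pos hpj, entryVal, hpj, xseq_eq_pk, hldef]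
      · have hple : p.2.1 < j := by have := hb p hp; omega
        rw [if_neg hpj, entryVal, hxs', hldef]
        simp only []
        rw [getD_xls pk hple]
    rw [hmain]
    exact mul_inv_eq_one.2 hEq
  · have hnil : L = [] ∨ 1 ≤ j := by
      rcases L with _ | ⟨p0, L'⟩
      · exact Or.inl rfl
      · right
        have h1 := (hG.1 p0 (mem_cons_self)).1
        have h2 := hb p0 (mem_cons_self)
        omega
    rcases eq_or_ne L [] with rfl | hLne
    · simp only [prodL_nil] at hEq
      exact hm hEq.symm
    · have hj1 : 1 ≤ j := by
        rcases hnil with h | h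
        · exact absurd h hLne
        · exact h
      exact IH (j - 1) (by omega) m L hG
        (by
          intro p hp
          have h1 := hb p hp
          have h2 : ¬ (p.2.1 = j) := fun hc => hex ⟨p, hp, hc⟩
          omega) hm hEq

def Uset (e x : ℕ → G) (n : ℕ) : Set G := {g | ∃ L, Good e n L ∧ prodL x L = g}

lemma Uset_anti (e x : ℕ → G) {n n' : ℕ} (h : n ≤ n') : Uset e x n' ⊆ Uset e x n := by
  rintro g ⟨L, hL, hp⟩
  exact ⟨L, good_le e h hL, hp⟩

lemma one_mem_Uset (e x : ℕ → G) (n : ℕ) : (1 : G) ∈ Uset e x n := ⟨[], good_nil e n, rfl⟩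

lemma xn_mem_Uset (e x : ℕ → G) (n : ℕ) : x n ∈ Uset e x n :=
  ⟨[((1 : G), n, true)], good_single e n true, by simp [prodL, entryVal, sg]⟩

lemma exists_bound (L : List (Entry G)) : ∃ j, ∀ p ∈ L, p.2.1 ≤ j := by
  induction L with
  | nil => exact ⟨0, by simp⟩
  | cons p L ih =>
    obtain ⟨j, hj⟩ := ih
    refine ⟨max p.2.1 j, ?_⟩
    intro q hq
    rcases mem_cons.1 hq with rfl | hq
    · exact le_max_left _ _
    · exact le_trans (hj q hq) (le_max_right _ _)

def gfb (e x : ℕ → G) (he : Surjective e) : GroupFilterBasis G where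
  sets := {s | ∃ n, s = Uset e x n}
  nonempty := ⟨Uset e x 0, 0, rfl⟩
  inter_sets := by
    rintro s t ⟨n, rfl⟩ ⟨m, rfl⟩
    exact ⟨Uset e x (max n m), ⟨max n m, rfl⟩,
      Set.subset_inter (Uset_anti e x (le_max_left _ _)) (Uset_anti e x (le_max_right _ _))⟩
  one' := by
    rintro U ⟨n, rfl⟩
    exact one_mem_Uset e x n
  mul' := by
    rintro U ⟨n, rfl⟩
    refine ⟨Uset e x (n + 1), ⟨n + 1, rfl⟩, ?_⟩
    rw [Set.mul_subset_iff]
    rintro g₁ ⟨L₁, h₁, rfl⟩ g₂ ⟨L₂, h₂, rfl⟩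
    exact ⟨L₁ ++ L₂, good_append e h₁ h₂, prodL_append x L₁ L₂⟩
  inv' := by
    rintro U ⟨n, rfl⟩
    refine ⟨Uset e x n, ⟨n, rfl⟩, ?_⟩
    rintro g ⟨L, hL, rfl⟩
    exact ⟨flipRev L, good_flipRev e hL, prodL_flipRev x L⟩
  conj' := by
    intro x₀ U hU
    obtain ⟨n, rfl⟩ := hU
    obtain ⟨k, rfl⟩ := he x₀
    refine ⟨Uset e x (max n k + 1), ⟨max n k + 1, rfl⟩, ?_⟩
    rintro g ⟨L, hL, rfl⟩
    exact ⟨L.map (conjE (e k)),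
      good_conjE e (le_max_right n k) (le_max_left n k) hL, prodL_conjE x (e k) L⟩


lemma exists_avoid {G : Type*} [Group G] (h : ¬AlgebraicallyIsolated G)
    (fs : List (Monomial G)) :
    ∃ g : G, g ≠ 1 ∧ ∀ f ∈ fs, f.eval 1 ≠ 1 → f.eval g ≠ 1 := by
  classical
  by_contra hc
  push_neg at hc
  apply h
  refine ⟨fs.filter (fun f => f.eval 1 ≠ 1), ?_⟩
  ext g
  simp only [Set.mem_setOf_eq, List.mem_filter, decide_eq_true_eq]
  constructor
  · intro hg
    obtain ⟨f, hf, h1, h2⟩ := hc g hg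
    exact ⟨f, ⟨hf, h1⟩, h2⟩
  · rintro ⟨f, ⟨hf, h1⟩, h2⟩
    intro hg1
    rw [hg1] at h2
    exact h1 h2

theorem main_forward {G : Type*} [Group G] [Countable G]
    (h : ¬AlgebraicallyIsolated G) : ¬NonTopologizable G := by
  classical
  obtain ⟨e, he⟩ := exists_surjective_nat G
  set pk : List G → G := fun l => Classical.choose (exists_avoid h (FS e l)) with hpkdef
  have hpk1 : ∀ l : List G, pk l ≠ 1 := fun l =>
    (Classical.choose_spec (exists_avoid h (FS e l))).1
  have hpk2 : ∀ l : List G, ∀ f ∈ FS e l, f.eval 1 ≠ 1 → f.eval (pk l) ≠ 1 := fun l =>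
    (Classical.choose_spec (exists_avoid h (FS e l))).2
  set x : ℕ → G := xseq pk with hx
  have hinv := invariant e pk hpk2
  set B : GroupFilterBasis G := gfb e x he with hB
  letI t : TopologicalSpace G := B.topology
  haveI htg : @IsTopologicalGroup G t _ := B.isTopologicalGroup
  have hmemB : ∀ n : ℕ, Uset e x n ∈ B := fun n => ⟨n, rfl⟩
  have hclosed : @IsClosed G t {1} := by
    rw [← isOpen_compl_iff, isOpen_iff_mem_nhds]
    intro g hg
    have hg1 : g ≠ 1 := hg
    obtain ⟨m, hm⟩ := he g⁻¹
    rw [(B.nhds_hasBasis g).mem_iff]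
    refine ⟨Uset e x (m + 1), hmemB (m + 1), ?_⟩
    rintro y ⟨u, hu, rfl⟩
    simp only [Set.mem_compl_iff, Set.mem_singleton_iff]
    intro hy
    have hue : u = e m := by
      rw [hm]
      exact eq_inv_of_mul_eq_one_right hy
    obtain ⟨L, hL, hp⟩ := hu
    obtain ⟨j, hj⟩ := exists_bound L
    have hem : e m ≠ 1 := by
      rw [hm]
      simpa using hg1
    exact hinv j m L hL hj hem (hp.trans hue)
  haveI ht2 : @T2Space G t := (IsTopologicalGroup.t2Space_iff_one_closed (G := G)).2 hclosed
  intro hNT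
  have hbot : t = ⊥ := hNT t htg ht2
  have hopen1 : @IsOpen G t {(1 : G)} := by rw [hbot]; trivial
  have h1n : ({(1 : G)} : Set G) ∈ @nhds G t 1 := hopen1.mem_nhds rfl
  rw [(B.nhds_one_hasBasis).mem_iff] at h1n
  obtain ⟨V, ⟨n, rfl⟩, hV⟩ := h1n
  have := hV (xn_mem_Uset e x n)
  simp only [Set.mem_singleton_iff] at this
  rw [hx, xseq_eq_pk] at this
  exact hpk1 _ this

theorem main_backward {G : Type*} [Group G] (h : AlgebraicallyIsolated G) :
    NonTopologizable G := by
  obtain ⟨fs, hfs⟩ := h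
  intro t ht h2
  letI := t
  haveI := ht
  haveI := h2
  have hcontT : ∀ l : List (ℤ × G), Continuous fun g : G => (l.map fun p => g ^ p.1 * p.2).prod := by
    intro l
    induction l with
    | nil => simpa using continuous_const
    | cons p l ih =>
      simp only [List.map_cons, List.prod_cons]
      exact (((continuous_zpow p.1).mul continuous_const).mul ih)
  have hcont : ∀ f : Monomial G, Continuous fun g : G => f.eval g := by
    intro f
    have : (fun g : G => f.eval g) = fun g : G =>
        f.head * ((f.tail.map fun p => g ^ p.1 * p.2).prod) := rfl
    rw [this]
    exact continuous_const.mul (hcontT f.tail)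
  have hclosed : IsClosed {g : G | ∃ f ∈ fs, f.eval g = 1} := by
    clear hfs
    induction fs with
    | nil => simpa using isClosed_empty
    | cons f fs ih =>
      have heq : {g : G | ∃ f' ∈ f :: fs, f'.eval g = 1}
          = (fun g => f.eval g) ⁻¹' {1} ∪ {g : G | ∃ f' ∈ fs, f'.eval g = 1} := by
        ext g
        simp only [Set.mem_setOf_eq, List.mem_cons, Set.mem_union, Set.mem_preimage,
          Set.mem_singleton_iff]
        constructor
        · rintro ⟨f', hf', hev⟩
          rcases hf' with rfl | hf'
          · exact Or.inl hev
          · exact Or.inr ⟨f', hf', hev⟩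
        · rintro (hev | ⟨f', hf', hev⟩)
          · exact ⟨f, Or.inl rfl, hev⟩
          · exact ⟨f', Or.inr hf', hev⟩
      rw [heq]
      exact (isClosed_singleton.preimage (hcont f)).union ih
  have hopen : IsOpen ({(1 : G)} : Set G) := by
    have : ({(1 : G)} : Set G) = {g : G | ∃ f ∈ fs, f.eval g = 1}ᶜ := by
      rw [← hfs]
      ext g
      simp
    rw [this]
    exact hclosed.isOpen_compl
  have hall : ∀ a : G, IsOpen ({a} : Set G) := by
    intro a
    have : ({a} : Set G) = (fun g => a⁻¹ * g) ⁻¹' {1} := by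
      ext g
      simp only [Set.mem_singleton_iff, Set.mem_preimage]
      constructor
      · rintro rfl; simp
      · intro hg
        rw [inv_mul_eq_one] at hg
        exact hg.symm
    rw [this]
    exact hopen.preimage (continuous_const.mul continuous_id)
  haveI := discreteTopology_iff_isOpen_singleton.2 hall
  exact DiscreteTopology.eq_bot

end NTP

theorem countable_nonTopologizable_iff_algebraicallyIsolated
    {G : Type*} [Group G] [Countable G] :
    NonTopologizable G ↔ AlgebraicallyIsolated G := by
  constructor
  · intro hNT
    by_contra h
    exact NTP.main_forward h hNT
  · exact NTP.main_backward
end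

section
/- Let G be a group (of any cardinality). If the identity e is algebraically isolated in G, then G is non-topologizable, i.e. every topology on G making G a Hausdorff topological group is the discrete topology. -/
theorem nonTopologizable_of_algebraicallyIsolated {G : Type*} [Group G]
    (h : AlgebraicallyIsolated G) : NonTopologizable G := by
  intro t ht h2
  obtain ⟨fs, hfs⟩ := h
  have hcont : ∀ f : Monomial G, Continuous (fun g : G => f.eval g) := by
    intro f
    unfold Monomial.eval
    apply continuous_const.mul
    apply continuous_list_prod
    intro p hp
    exact (continuous_zpow p.1).mul continuous_const
  have hclosed : IsClosed {g : G | ∃ f ∈ fs, f.eval g = 1} := by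
    have : {g : G | ∃ f ∈ fs, f.eval g = 1} = ⋃ f ∈ fs, (fun g => f.eval g) ⁻¹' {1} := by
      ext g; simp [Set.mem_iUnion]
    rw [this]
    exact Set.Finite.isClosed_biUnion (fs.finite_toSet)
      fun f _ => (isClosed_singleton).preimage (hcont f)
  have hopen : IsOpen ({1} : Set G) := by
    have : ({1} : Set G) = {g : G | ∃ f ∈ fs, f.eval g = 1}ᶜ := by
      rw [← hfs]; ext g; simp
    rw [this]
    exact hclosed.isOpen_compl
  have := discreteTopology_of_isOpen_singleton_one hopen
  exact DiscreteTopology.eq_bot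
end

section
/- Every abelian non-topologizable group is finite. Equivalently, every infinite abelian group admits a non-discrete Hausdorff group topology. -/
/-- The natural embedding of `ℚ/ℤ` into `ℝ/ℤ`. -/
noncomputable def ratCircleToRealCircle : AddCircle (1 : ℚ) →+ AddCircle (1 : ℝ) :=
  QuotientAddGroup.map (AddSubgroup.zmultiples (1 : ℚ)) (AddSubgroup.zmultiples (1 : ℝ))
    (Rat.castHom ℝ).toAddMonoidHom (by
      intro q hq
      obtain ⟨n, hn⟩ := AddSubgroup.mem_zmultiples_iff.mp hq
      refine AddSubgroup.mem_comap.mpr (AddSubgroup.mem_zmultiples_iff.mpr ⟨n, ?_⟩)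
      simp only [RingHom.toAddMonoidHom_eq_coe, AddMonoidHom.coe_coe, Rat.coe_castHom]
      rw [← hn, zsmul_eq_mul, zsmul_eq_mul]
      push_cast
      ring)

lemma ratCircleToRealCircle_eq_zero {x : AddCircle (1 : ℚ)}
    (hx : ratCircleToRealCircle x = 0) : x = 0 := by
  induction x using QuotientAddGroup.induction_on with
  | H q =>
    have h : ((q : ℝ) : AddCircle (1 : ℝ)) = 0 := hx
    rw [QuotientAddGroup.eq_zero_iff] at h ⊢
    obtain ⟨n, hn⟩ := AddSubgroup.mem_zmultiples_iff.mp h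
    refine AddSubgroup.mem_zmultiples_iff.mpr ⟨n, ?_⟩
    rw [zsmul_eq_mul] at hn ⊢
    exact_mod_cast hn

theorem abelian_nonTopologizable_finite {G : Type*} [CommGroup G]
    (h : NonTopologizable G) : Finite G := by
  classical
  haveI : Fact ((0 : ℝ) < 1) := ⟨one_pos⟩
  set C := CharacterModule (Additive G) with hC
  set P := C → AddCircle (1 : ℝ) with hP
  -- the evaluation homomorphism into the product of circles
  let F : G →* Multiplicative P :=
  { toFun := fun g => Multiplicative.ofAdd
      (fun c => ratCircleToRealCircle (c (Additive.ofMul g)))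
    map_one' := by
      show (fun c : C => ratCircleToRealCircle (c (Additive.ofMul (1 : G)))) = (0 : P)
      funext c
      show ratCircleToRealCircle (c (Additive.ofMul (1 : G))) = 0
      simp
    map_mul' := by
      intro x y
      show (fun c : C => ratCircleToRealCircle (c (Additive.ofMul (x * y)))) =
        (fun c : C => ratCircleToRealCircle (c (Additive.ofMul x))) +
          (fun c : C => ratCircleToRealCircle (c (Additive.ofMul y)))
      funext c
      show ratCircleToRealCircle (c (Additive.ofMul (x * y))) =
        ratCircleToRealCircle (c (Additive.ofMul x)) +
          ratCircleToRealCircle (c (Additive.ofMul y))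
      rw [← map_add]
      congr 1
      exact map_add c (Additive.ofMul x) (Additive.ofMul y) }
  have hFinj : Function.Injective F := by
    intro x y hxy
    have hxy' : F (x * y⁻¹) = 1 := by rw [map_mul, hxy, map_inv, mul_inv_cancel]
    have hz : ∀ c : C, c (Additive.ofMul (x * y⁻¹)) = 0 := by
      intro c
      apply ratCircleToRealCircle_eq_zero
      exact congrFun hxy' c
    have : Additive.ofMul (x * y⁻¹) = 0 := CharacterModule.eq_zero_of_character_apply hz
    have : x * y⁻¹ = 1 := this
    exact mul_inv_eq_one.mp this
  -- the induced topology on G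
  let t : TopologicalSpace G := TopologicalSpace.induced F inferInstance
  haveI htg : @IsTopologicalGroup G t _ := topologicalGroup_induced F
  haveI htP : T2Space (Multiplicative P) := inferInstanceAs (T2Space P)
  haveI ht2 : @T2Space G t := by
    letI := t
    exact (Topology.IsEmbedding.mk ⟨rfl⟩ hFinj).t2Space
  have hbot : t = ⊥ := h t htg ht2
  -- the range of F, a discrete subgroup of a compact group
  let S : Subgroup (Multiplicative P) := F.range
  let e : G → S := F.rangeRestrict
  have hesurj : Function.Surjective e := F.rangeRestrict_surjective
  have hcomp : t = TopologicalSpace.induced e (inferInstance : TopologicalSpace S) := by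
    show TopologicalSpace.induced F _ = _
    rw [instTopologicalSpaceSubtype, induced_compose]
    rfl
  haveI hSdisc : DiscreteTopology S := by
    rw [discreteTopology_iff_forall_isOpen]
    intro V
    have hV : @IsOpen G (TopologicalSpace.induced e inferInstance) (e ⁻¹' V) := by
      rw [← hcomp, hbot]
      trivial
    rw [isOpen_induced_iff] at hV
    obtain ⟨W, hW, hWV⟩ := hV
    rwa [hesurj.preimage_injective hWV] at hW
  -- S is closed in the compact group Multiplicative P, hence compact, hence finite
  haveI : CompactSpace (Multiplicative P) := inferInstanceAs (CompactSpace P)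
  have hclosed : IsClosed (S : Set (Multiplicative P)) := Subgroup.isClosed_of_discrete
  have hScompact : IsCompact (S : Set (Multiplicative P)) := hclosed.isCompact
  have hSfin : (S : Set (Multiplicative P)).Finite := hScompact.finite (isDiscrete_iff_discreteTopology.mpr hSdisc)
  haveI : Finite S := hSfin.to_subtype
  exact Finite.of_injective e fun a b hab => hFinj (congrArg Subtype.val hab)
end

section
/- Let H be a group and let N be the intersection of all normal subgroups of finite index in H. If the quotient group H/N is non-topologizable, then N has finite index in H. -/
theorem finiteIndex_of_nonTopologizable_quotient {H : Type*} [Group H]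
    (N : Subgroup H) [N.Normal]
    (hN : N = ⨅ (K : Subgroup H) (_ : K.Normal) (_ : K.FiniteIndex), K)
    (h : NonTopologizable (H ⧸ N)) : N.FiniteIndex := by
  -- index type: finite-index normal subgroups
  let ι := {K : Subgroup H // K.Normal ∧ K.FiniteIndex}
  haveI : ∀ i : ι, @Subgroup.Normal H _ i.1 := fun i => i.2.1
  -- each quotient gets the discrete topology
  letI tP : ∀ i : ι, TopologicalSpace (H ⧸ i.1) := fun _ => ⊥
  haveI : ∀ i : ι, DiscreteTopology (H ⧸ i.1) := fun _ => ⟨rfl⟩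
  haveI : ∀ i : ι, IsTopologicalGroup (H ⧸ i.1) := fun i =>
    { continuous_mul := continuous_of_discreteTopology
      continuous_inv := continuous_of_discreteTopology }
  -- the product map
  let ψ : H →* ∀ i : ι, H ⧸ i.1 := MonoidHom.mk'
    (fun h => fun i => QuotientGroup.mk h) (fun a b => by funext i; rfl)
  have hNle : ∀ i : ι, N ≤ i.1 := by
    intro i
    rw [hN]
    exact iInf_le_of_le i.1 (iInf_le_of_le i.2.1 (iInf_le _ i.2.2))
  have hker : N ≤ ψ.ker := by
    intro x hx
    ext i
    exact (QuotientGroup.eq_one_iff x).2 (hNle i hx)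
  let φ : H ⧸ N →* ∀ i : ι, H ⧸ i.1 := QuotientGroup.lift N ψ hker
  have hinj : Function.Injective φ := by
    intro a b hab
    obtain ⟨a, rfl⟩ := QuotientGroup.mk_surjective a
    obtain ⟨b, rfl⟩ := QuotientGroup.mk_surjective b
    rw [QuotientGroup.eq]
    rw [hN]
    simp only [Subgroup.mem_iInf]
    intro K hKn hKf
    haveI := hKn
    have := congrFun hab (⟨K, hKn, hKf⟩ : ι)
    exact QuotientGroup.eq.mp this
  -- the induced topology
  letI t : TopologicalSpace (H ⧸ N) := TopologicalSpace.induced φ inferInstance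
  haveI htg : @IsTopologicalGroup (H ⧸ N) t _ := topologicalGroup_induced φ
  haveI ht2 : @T2Space (H ⧸ N) t := by
    have hemb : Topology.IsEmbedding φ := ⟨⟨rfl⟩, hinj⟩
    exact hemb.t2Space
  have hbot : t = ⊥ := h t htg ht2
  -- hence {1} is open in the induced topology
  have hopen : @IsOpen _ t ({1} : Set (H ⧸ N)) := by
    rw [hbot]; trivial
  rw [isOpen_induced_iff] at hopen
  obtain ⟨U, hU, hUpre⟩ := hopen
  have hU1 : U ∈ nhds (φ 1) := hU.mem_nhds (by
    rw [← Set.mem_preimage, hUpre]; rfl)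
  rw [nhds_pi, Filter.mem_pi] at hU1
  obtain ⟨I, hIfin, t', ht', hIt⟩ := hU1
  haveI := hIfin.to_subtype
  have hTfin : (⨅ i : I, (i.1.1 : Subgroup H)).FiniteIndex :=
    Subgroup.finiteIndex_iInf fun i => i.1.2.2
  have hTle : (⨅ i : I, (i.1.1 : Subgroup H)) ≤ N := by
    intro x hx
    simp only [Subgroup.mem_iInf] at hx
    have hmem : φ (QuotientGroup.mk x) ∈ U := by
      apply hIt
      intro i hi
      have hx1 : φ (QuotientGroup.mk x) i = 1 :=
        (QuotientGroup.eq_one_iff x).2 (hx ⟨i, hi⟩)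
      rw [hx1]
      have : φ 1 i = 1 := by simp [φ, ψ]
      exact this ▸ mem_of_mem_nhds (ht' i)
    have : QuotientGroup.mk x ∈ ({1} : Set (H ⧸ N)) := by
      rw [← hUpre]; exact hmem
    exact (QuotientGroup.eq_one_iff x).1 this
  exact Subgroup.finiteIndex_of_le hTle
end
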